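/- Let q ≥ 3 be an integer and let L be a K_q-divisible graph. Let A be a K_q-absorber for L and let B be a K_q-absorber for ∇_q K_q. Let 𝒬₁ be a K_q-decomposition of A and 𝒬₂ a K_q-decomposition of L ∪ A. Then the graph A' := ∇_q L ∪ ∇_q A ∪ ⋃_{Q ∈ 𝒬₁ ∪ 𝒬₂} B_Q, where B_Q is a copy of B rooted at ∇_q Q (with all copies otherwise disjoint), is also a K_q-absorber for L. Furthermore, m₂(A', V(L)) ≤ max{ (q+1)/2, m₂(B, V(∇_q K_q)) }. -/

import Mathlib

/-- The edges spanned by a clique with vertex set `S`. -/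
def cliqueEdges {V : Type} (S : Finset V) : Set (Sym2 V) :=
  {f | ¬f.IsDiag ∧ ∀ v ∈ f, v ∈ S}

/-- A `K_q`-decomposition of a graph `G`. -/
def IsKqDecomp {V : Type} (q : ℕ) (G : SimpleGraph V) (𝒟 : Set (Finset V)) : Prop :=
  (∀ S ∈ 𝒟, G.IsNClique q S) ∧
  ∀ e ∈ G.edgeSet, ∃! S, S ∈ 𝒟 ∧ e ∈ cliqueEdges S

/-- A graph is `K_q`-divisible. -/
def IsKqDivisible {V : Type} (q : ℕ) (G : SimpleGraph V) : Prop :=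
  q.choose 2 ∣ G.edgeSet.ncard ∧ ∀ v : V, (q - 1) ∣ (G.neighborSet v).ncard

/-- `A` is a `K_q`-absorber for `L` with root set `VL`. -/
def IsAbsorber {V : Type} (q : ℕ) (L A : SimpleGraph V) (VL : Set V) : Prop :=
  L.support ⊆ VL ∧
  (∀ u ∈ VL, ∀ v ∈ VL, ¬A.Adj u v) ∧
  (∃ 𝒟, IsKqDecomp q A 𝒟) ∧
  (∃ 𝒟, IsKqDecomp q (L ⊔ A) 𝒟)

/-- The maximum rooted density `m(H,R)`. -/
noncomputable def rootedDensity {V : Type} (H : SimpleGraph V) (R : Set V) : ℝ :=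
  sSup {x : ℝ | ∃ H' : H.Subgraph, (H'.verts \ R).Nonempty ∧
    x = (H'.edgeSet.ncard : ℝ) / ((H'.verts \ R).ncard : ℝ)}

/-- The maximum 2-density `m₂(H)`. -/
noncomputable def density2 {V : Type} (H : SimpleGraph V) : ℝ :=
  sSup {x : ℝ | ∃ H' : H.Subgraph, 3 ≤ H'.verts.ncard ∧
    x = ((H'.edgeSet.ncard : ℝ) - 1) / ((H'.verts.ncard : ℝ) - 2)}

/-- The maximum rooted 2-density `m₂(H,R)`. -/
noncomputable def rootedDensity2 {V : Type} (H : SimpleGraph V) (R : Set V) : ℝ :=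
  max (rootedDensity H R) (density2 H)

/-- The vertex type of `∇_q X`: the original vertices together with `q-2` new
anti-edge vertices for each pair. -/
abbrev NewV (q : ℕ) (V : Type) := V ⊕ (Sym2 V × Fin (q - 2))

/-- `∇_q X`: the graph obtained from `X` by replacing every edge `f` of `X`
with `AntiEdge_q(f)` (all new vertices distinct). -/
def nabla (q : ℕ) {V : Type} (X : SimpleGraph V) : SimpleGraph (NewV q V) :=
  SimpleGraph.fromRel (fun a b =>
    (∃ (u : V) (f : Sym2 V) (i : Fin (q - 2)),
        a = Sum.inl u ∧ b = Sum.inr (f, i) ∧ f ∈ X.edgeSet ∧ u ∈ f) ∨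
    (∃ (f : Sym2 V) (i j : Fin (q - 2)),
        a = Sum.inr (f, i) ∧ b = Sum.inr (f, j) ∧ f ∈ X.edgeSet ∧ i ≠ j))

/-- The map from the vertices of `∇_q K_q` (on `Fin q`) to the vertices of
`∇_q Y` for a graph `Y` on `V`, induced by `σ : Fin q → V`. -/
def coreMap (q : ℕ) {V : Type} (σ : Fin q → V) : NewV q (Fin q) → NewV q V
  | Sum.inl i => Sum.inl (σ i)
  | Sum.inr (f, t) => Sum.inr (f.map σ, t)

open Classical in
/-- Gluing map for the copy `B_Q` of the absorber `B`: root vertices of `B`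
(those in the range of `ρ`) are identified with the corresponding vertices of
`∇_q Q`, all other vertices of `B_Q` are fresh vertices tagged by `Q`. -/
noncomputable def jmap (q : ℕ) {V W : Type} (ρ : NewV q (Fin q) → W)
    (σ : Fin q → V) (Q : Finset V) (w : W) : NewV q V ⊕ (Finset V × W) :=
  if h : ∃ x, ρ x = w then Sum.inl (coreMap q σ h.choose) else Sum.inr (Q, w)

/-- The glued graph `A' := ∇_q L ∪ ∇_q A ∪ ⋃_{Q ∈ 𝒬} B_Q`, where `B_Q` is a
copy of `B` rooted at `∇_q Q` (copies otherwise disjoint). -/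
noncomputable def gluedAbsorber (q : ℕ) {V W : Type} (L A : SimpleGraph V)
    (B : SimpleGraph W) (ρ : NewV q (Fin q) → W) (σ : Finset V → Fin q → V)
    (𝒬 : Set (Finset V)) : SimpleGraph (NewV q V ⊕ (Finset V × W)) :=
  SimpleGraph.fromRel (fun a b =>
    (∃ x y : NewV q V, (nabla q L ⊔ nabla q A).Adj x y ∧
      a = Sum.inl x ∧ b = Sum.inl y) ∨
    (∃ Q ∈ 𝒬, ∃ w w' : W, B.Adj w w' ∧
      a = jmap q ρ (σ Q) Q w ∧ b = jmap q ρ (σ Q) Q w'))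

section Part1
variable {V W : Type}

lemma jmap_rho (q : ℕ) (ρ : NewV q (Fin q) ↪ W) (σ : Fin q → V) (Q : Finset V)
    (x : NewV q (Fin q)) : jmap q ρ σ Q (ρ x) = Sum.inl (coreMap q σ x) := by
  unfold jmap
  rw [dif_pos ⟨x, rfl⟩]
  congr 2
  exact ρ.injective (Exists.choose_spec (⟨x, rfl⟩ : ∃ y, ρ y = ρ x))

lemma jmap_not (q : ℕ) (ρ : NewV q (Fin q) ↪ W) (σ : Fin q → V) (Q : Finset V)
    {w : W} (h : w ∉ Set.range ρ) : jmap q ρ σ Q w = Sum.inr (Q, w) := by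
  unfold jmap
  rw [dif_neg]
  rintro ⟨x, hx⟩
  exact h ⟨x, hx⟩

lemma coreMap_injective {q : ℕ} {σ : Fin q → V} (hσ : Function.Injective σ) :
    Function.Injective (coreMap q σ) := by
  rintro (u | ⟨f, t⟩) (v | ⟨g, s⟩) h <;> simp only [coreMap] at h
  · simp only [Sum.inl.injEq] at h ⊢; exact hσ h
  · exact absurd h (by simp)
  · exact absurd h (by simp)
  · simp only [Sum.inr.injEq, Prod.mk.injEq] at h ⊢
    exact ⟨Sym2.map.injective hσ h.1, h.2⟩

lemma jmap_injective {q : ℕ} {ρ : NewV q (Fin q) ↪ W} {σ : Fin q → V}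
    (hσ : Function.Injective σ) (Q : Finset V) :
    Function.Injective (jmap q ρ σ Q) := by
  intro w w' h
  by_cases h1 : w ∈ Set.range ρ <;> by_cases h2 : w' ∈ Set.range ρ
  · obtain ⟨x, rfl⟩ := h1; obtain ⟨x', rfl⟩ := h2
    rw [jmap_rho, jmap_rho] at h
    simp only [Sum.inl.injEq] at h
    exact congrArg ρ (coreMap_injective hσ h)
  · rw [jmap_not q ρ σ Q h2] at h
    obtain ⟨x, rfl⟩ := h1; rw [jmap_rho] at h; exact absurd h (by simp)
  · rw [jmap_not q ρ σ Q h1] at h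
    obtain ⟨x', rfl⟩ := h2; rw [jmap_rho] at h; exact absurd h (by simp)
  · rw [jmap_not q ρ σ Q h1, jmap_not q ρ σ Q h2] at h
    simp only [Sum.inr.injEq, Prod.mk.injEq] at h
    exact h.2

lemma jmap_eq_inl {q : ℕ} {ρ : NewV q (Fin q) ↪ W} {σ : Fin q → V} {Q : Finset V}
    {w : W} {z : NewV q V} (h : jmap q ρ σ Q w = Sum.inl z) :
    ∃ x, ρ x = w ∧ coreMap q σ x = z := by
  by_cases h1 : w ∈ Set.range ρ
  · obtain ⟨x, rfl⟩ := h1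
    rw [jmap_rho] at h
    simp only [Sum.inl.injEq] at h
    exact ⟨x, rfl, h⟩
  · rw [jmap_not q ρ σ Q h1] at h; exact absurd h (by simp)

lemma jmap_eq_inr {q : ℕ} {ρ : NewV q (Fin q) ↪ W} {σ : Fin q → V} {Q : Finset V}
    {w : W} {p : Finset V × W} (h : jmap q ρ σ Q w = Sum.inr p) :
    w ∉ Set.range ρ ∧ p = (Q, w) := by
  by_cases h1 : w ∈ Set.range ρ
  · obtain ⟨x, rfl⟩ := h1; rw [jmap_rho] at h; exact absurd h (by simp)
  · rw [jmap_not q ρ σ Q h1] at h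
    simp only [Sum.inr.injEq] at h
    exact ⟨h1, h.symm⟩

lemma nabla_adj {q : ℕ} {X : SimpleGraph V} {a b : NewV q V} :
    (nabla q X).Adj a b ↔ a ≠ b ∧
      (∃ f ∈ X.edgeSet,
        (∃ u i, u ∈ f ∧ ((a = Sum.inl u ∧ b = Sum.inr (f,i)) ∨ (b = Sum.inl u ∧ a = Sum.inr (f,i)))) ∨
        (∃ i j : Fin (q-2), a = Sum.inr (f,i) ∧ b = Sum.inr (f,j))) := by
  rw [nabla, SimpleGraph.fromRel_adj]
  constructor
  · rintro ⟨hne, h | h⟩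
    · rcases h with ⟨u, f, i, ha, hb, hf, hu⟩ | ⟨f, i, j, ha, hb, hf, hij⟩
      · exact ⟨hne, f, hf, Or.inl ⟨u, i, hu, Or.inl ⟨ha, hb⟩⟩⟩
      · exact ⟨hne, f, hf, Or.inr ⟨i, j, ha, hb⟩⟩
    · rcases h with ⟨u, f, i, hb, ha, hf, hu⟩ | ⟨f, i, j, hb, ha, hf, hij⟩
      · exact ⟨hne, f, hf, Or.inl ⟨u, i, hu, Or.inr ⟨hb, ha⟩⟩⟩
      · exact ⟨hne, f, hf, Or.inr ⟨j, i, ha, hb⟩⟩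
  · rintro ⟨hne, f, hf, ⟨u, i, hu, ⟨ha, hb⟩ | ⟨hb, ha⟩⟩ | ⟨i, j, ha, hb⟩⟩
    · exact ⟨hne, Or.inl (Or.inl ⟨u, f, i, ha, hb, hf, hu⟩)⟩
    · exact ⟨hne, Or.inr (Or.inl ⟨u, f, i, hb, ha, hf, hu⟩)⟩
    · refine ⟨hne, Or.inl (Or.inr ⟨f, i, j, ha, hb, hf, ?_⟩)⟩
      rintro rfl; exact hne (ha.trans hb.symm)

lemma nabla_sup (q : ℕ) (X Y : SimpleGraph V) :
    nabla q (X ⊔ Y) = nabla q X ⊔ nabla q Y := by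
  ext a b
  rw [SimpleGraph.sup_adj, nabla_adj, nabla_adj, nabla_adj]
  constructor
  · rintro ⟨hne, f, hf, hc⟩
    rw [SimpleGraph.edgeSet_sup, Set.mem_union] at hf
    rcases hf with hf | hf
    · exact Or.inl ⟨hne, f, hf, hc⟩
    · exact Or.inr ⟨hne, f, hf, hc⟩
  · rintro (⟨hne, f, hf, hc⟩ | ⟨hne, f, hf, hc⟩)
    · exact ⟨hne, f, by rw [SimpleGraph.edgeSet_sup]; exact Or.inl hf, hc⟩
    · exact ⟨hne, f, by rw [SimpleGraph.edgeSet_sup]; exact Or.inr hf, hc⟩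

lemma glued_adj {q : ℕ} {L A : SimpleGraph V} {B : SimpleGraph W} {ρ : NewV q (Fin q) → W}
    {σ : Finset V → Fin q → V} {𝒬 : Set (Finset V)} {a b : NewV q V ⊕ (Finset V × W)} :
    (gluedAbsorber q L A B ρ σ 𝒬).Adj a b ↔
      (∃ x y : NewV q V, (nabla q L ⊔ nabla q A).Adj x y ∧ a = Sum.inl x ∧ b = Sum.inl y) ∨
      (a ≠ b ∧ ∃ Q ∈ 𝒬, ∃ w w' : W, B.Adj w w' ∧
        a = jmap q ρ (σ Q) Q w ∧ b = jmap q ρ (σ Q) Q w') := by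
  rw [gluedAbsorber, SimpleGraph.fromRel_adj]
  constructor
  · rintro ⟨hne, h | h⟩
    · rcases h with h | ⟨Q, hQ, w, w', hadjx, ha, hb⟩
      · exact Or.inl h
      · exact Or.inr ⟨hne, Q, hQ, w, w', hadjx, ha, hb⟩
    · rcases h with ⟨x, y, hxy, hb, ha⟩ | ⟨Q, hQ, w, w', hadj, hb, ha⟩
      · exact Or.inl ⟨y, x, hxy.symm, ha, hb⟩
      · exact Or.inr ⟨hne, Q, hQ, w', w, hadj.symm, ha, hb⟩
  · rintro (⟨x, y, hxy, ha, hb⟩ | ⟨hne, h⟩)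
    · subst ha; subst hb
      exact ⟨by simpa using hxy.ne, Or.inl (Or.inl ⟨x, y, hxy, rfl, rfl⟩)⟩
    · exact ⟨hne, Or.inl (Or.inr h)⟩

lemma coreMap_adj {q : ℕ} {σ : Fin q → V} (hinj : Function.Injective σ) {G : SimpleGraph V}
    (hcl : ∀ i j : Fin q, i ≠ j → G.Adj (σ i) (σ j)) {x y : NewV q (Fin q)}
    (h : (nabla q (⊤ : SimpleGraph (Fin q))).Adj x y) :
    (nabla q G).Adj (coreMap q σ x) (coreMap q σ y) := by
  rw [nabla_adj] at h ⊢
  obtain ⟨hne, f, hf, hcase⟩ := h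
  have hfG : f.map σ ∈ G.edgeSet := by
    induction f with
    | _ i j =>
      rw [SimpleGraph.edgeSet_top] at hf
      simp only [Sym2.map_pair_eq, SimpleGraph.mem_edgeSet]
      exact hcl i j (by simpa using hf)
  refine ⟨fun hc => hne (coreMap_injective hinj hc), f.map σ, hfG, ?_⟩
  rcases hcase with ⟨u, i, hu, hc⟩ | ⟨i, j, ha, hb⟩
  · refine Or.inl ⟨σ u, i, Sym2.mem_map.mpr ⟨u, hu, rfl⟩, ?_⟩
    rcases hc with ⟨rfl, rfl⟩ | ⟨rfl, rfl⟩
    · exact Or.inl ⟨rfl, rfl⟩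
    · exact Or.inr ⟨rfl, rfl⟩
  · subst ha; subst hb; exact Or.inr ⟨i, j, rfl, rfl⟩

end Part1

section Part2
variable {V W : Type} [Fintype V] [DecidableEq V] [Fintype W] [DecidableEq W]

/-- The clique filling an edge `f` of `L` together with its anti-edge gadget. -/
noncomputable def Tcl (q : ℕ) (W : Type) [Fintype W] [DecidableEq W] (f : Sym2 V) :
    Finset (NewV q V ⊕ (Finset V × W)) :=
  (Finset.univ.filter (· ∈ f)).image (fun u => Sum.inl (Sum.inl u)) ∪
  Finset.univ.image (fun i : Fin (q-2) => Sum.inl (Sum.inr (f, i)))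

lemma mem_Tcl {q : ℕ} {f : Sym2 V} {t : NewV q V ⊕ (Finset V × W)} :
    t ∈ Tcl q W f ↔ (∃ u ∈ f, t = Sum.inl (Sum.inl u)) ∨
      (∃ i : Fin (q-2), t = Sum.inl (Sum.inr (f, i))) := by
  simp only [Tcl, Finset.mem_union, Finset.mem_image, Finset.mem_filter, Finset.mem_univ,
    true_and]
  constructor
  · rintro (⟨u, hu, rfl⟩ | ⟨i, rfl⟩)
    · exact Or.inl ⟨u, hu, rfl⟩
    · exact Or.inr ⟨i, rfl⟩
  · rintro (⟨u, hu, rfl⟩ | ⟨i, rfl⟩)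
    · exact Or.inl ⟨u, hu, rfl⟩
    · exact Or.inr ⟨i, rfl⟩

lemma card_Tcl {q : ℕ} (hq : 3 ≤ q) {f : Sym2 V} (hf : ¬ f.IsDiag) :
    (Tcl q W f).card = q := by
  induction f with
  | _ u v =>
    have huv : u ≠ v := by simpa using hf
    rw [Tcl, Finset.card_union_of_disjoint, Finset.card_image_of_injective,
      Finset.card_image_of_injective]
    · have : Finset.univ.filter (· ∈ s(u,v)) = {u, v} := by
        ext w; simp [Sym2.mem_iff]
      rw [this, Finset.card_insert_of_notMem (by simpa using huv), Finset.card_singleton,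
        Finset.card_univ, Fintype.card_fin]
      omega
    · intro i j hij; simpa using hij
    · intro a b hab; simpa using hab
    · rw [Finset.disjoint_left]
      rintro t ht ht'
      simp only [Finset.mem_image, Finset.mem_filter] at ht ht'
      obtain ⟨a, _, rfl⟩ := ht
      obtain ⟨i, _, h⟩ := ht'
      exact absurd h (by simp)

/-- The family of copies of a decomposition of `B` (or of `∇K_q ⊔ B`) over cliques in `𝒬'`. -/
noncomputable def copyFam (q : ℕ) (ρ : NewV q (Fin q) → W) (σ : Finset V → Fin q → V)
    (𝒬' : Set (Finset V)) (𝒟0 : Set (Finset W)) : Set (Finset (NewV q V ⊕ (Finset V × W))) :=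
  {S' | ∃ Q ∈ 𝒬', ∃ S ∈ 𝒟0, S' = S.image (jmap q ρ (σ Q) Q)}

lemma isNClique_image_jmap {q : ℕ} {L A : SimpleGraph V} {B : SimpleGraph W}
    {ρ : NewV q (Fin q) ↪ W} {σ : Finset V → Fin q → V} {𝒬 : Set (Finset V)}
    {Q : Finset V} (hQ : Q ∈ 𝒬) (hinj : Function.Injective (σ Q))
    (hadj : ∀ i j : Fin q, i ≠ j → (L ⊔ A).Adj (σ Q i) (σ Q j))
    {S : Finset W}
    (hS : ((nabla q (⊤ : SimpleGraph (Fin q))).map ρ ⊔ B).IsNClique q S) :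
    (gluedAbsorber q L A B ρ σ 𝒬).IsNClique q (S.image (jmap q ρ (σ Q) Q)) := by
  constructor
  · intro a ha b hb hne
    simp only [Finset.coe_image, Set.mem_image, Finset.mem_coe] at ha hb
    obtain ⟨w, hw, rfl⟩ := ha; obtain ⟨w', hw', rfl⟩ := hb
    have hww : w ≠ w' := fun hc => hne (by rw [hc])
    have hadj2 := hS.1 (by exact hw) (by exact hw') hww
    rw [SimpleGraph.sup_adj] at hadj2
    rw [glued_adj]
    rcases hadj2 with hmap | hBadj
    · rw [SimpleGraph.map_adj] at hmap
      obtain ⟨x, y, hxy, hx, hy⟩ := hmap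
      subst hx; subst hy
      rw [jmap_rho, jmap_rho]
      refine Or.inl ⟨_, _, ?_, rfl, rfl⟩
      rw [← nabla_sup]
      exact coreMap_adj hinj hadj hxy
    · exact Or.inr ⟨fun hc => hww (jmap_injective hinj Q hc), Q, hQ, w, w', hBadj, rfl, rfl⟩
  · rw [Finset.card_image_of_injective _ (jmap_injective hinj Q)]; exact hS.2

lemma mem_cliqueEdges {S : Finset V} {a b : V} :
    s(a,b) ∈ cliqueEdges S ↔ a ≠ b ∧ a ∈ S ∧ b ∈ S := by
  unfold cliqueEdges
  simp only [Set.mem_setOf_eq, Sym2.isDiag_iff_proj_eq, Sym2.mem_iff]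
  constructor
  · rintro ⟨h1, h2⟩
    exact ⟨h1, h2 a (Or.inl rfl), h2 b (Or.inr rfl)⟩
  · rintro ⟨h1, h2, h3⟩
    refine ⟨h1, ?_⟩
    rintro v (rfl | rfl) <;> assumption

/-- two distinct root vertices in a clique of `∇K_q.map ρ ⊔ B` are `∇K_q`-adjacent. -/
lemma clique_roots_NB {q : ℕ} {B : SimpleGraph W} {ρ : NewV q (Fin q) ↪ W}
    (hBind : ∀ u ∈ Set.range ρ, ∀ v ∈ Set.range ρ, ¬B.Adj u v) {S₀ : Finset W}
    (hcl : ((nabla q (⊤ : SimpleGraph (Fin q))).map ρ ⊔ B).IsClique ↑S₀)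
    {x y : NewV q (Fin q)} (hx : ρ x ∈ S₀) (hy : ρ y ∈ S₀) (hne : x ≠ y) :
    (nabla q (⊤ : SimpleGraph (Fin q))).Adj x y := by
  have h := hcl (by exact hx) (by exact hy) (fun hc => hne (ρ.injective hc))
  rw [SimpleGraph.sup_adj] at h
  rcases h with h | h
  · rw [SimpleGraph.map_adj] at h
    obtain ⟨x', y', hxy, hx', hy'⟩ := h
    rwa [← ρ.injective hx', ← ρ.injective hy']
  · exact absurd h (hBind _ ⟨x, rfl⟩ _ ⟨y, rfl⟩)

lemma clique_roots_B {q : ℕ} {B : SimpleGraph W} {ρ : NewV q (Fin q) ↪ W}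
    (hBind : ∀ u ∈ Set.range ρ, ∀ v ∈ Set.range ρ, ¬B.Adj u v) {S₀ : Finset W}
    (hcl : B.IsClique ↑S₀) {x y : NewV q (Fin q)} (hx : ρ x ∈ S₀) (hy : ρ y ∈ S₀)
    (hne : x ≠ y) : False := by
  exact hBind _ ⟨x, rfl⟩ _ ⟨y, rfl⟩
    (hcl (by exact hx) (by exact hy) (fun hc => hne (ρ.injective hc)))

lemma nabla_no_inl_inl {q : ℕ} {X : SimpleGraph V} {u v : V} :
    ¬ (nabla q X).Adj (Sum.inl u) (Sum.inl v) := by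
  rw [nabla_adj]
  rintro ⟨hne, f, hf, ⟨u', i, hu', ⟨h1, h2⟩ | ⟨h1, h2⟩⟩ | ⟨i, j, h1, h2⟩⟩ <;> simp_all

end Part2

section Part2b
set_option linter.unusedSectionVars false
variable {V W : Type} [Fintype V] [DecidableEq V] [Fintype W] [DecidableEq W]

lemma coreMap_eq_inl {q : ℕ} {σQ : Fin q → V} {x₀ : NewV q (Fin q)} {u : V}
    (h : coreMap q σQ x₀ = Sum.inl u) : ∃ i, x₀ = Sum.inl i ∧ σQ i = u := by
  cases x₀ with
  | inl i => exact ⟨i, rfl, by simpa [coreMap] using h⟩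
  | inr p => obtain ⟨g, t⟩ := p; exact absurd h (by simp [coreMap])

lemma coreMap_eq_inr {q : ℕ} {σQ : Fin q → V} {x₀ : NewV q (Fin q)} {f : Sym2 V}
    {t : Fin (q-2)} (h : coreMap q σQ x₀ = Sum.inr (f, t)) :
    ∃ g, x₀ = Sum.inr (g, t) ∧ Sym2.map σQ g = f := by
  cases x₀ with
  | inl i => exact absurd h (by simp [coreMap])
  | inr p =>
    obtain ⟨g, t'⟩ := p
    simp only [coreMap, Sum.inr.injEq, Prod.mk.injEq] at h
    exact ⟨g, by rw [h.2], h.1⟩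

lemma image_jmap_inl {q : ℕ} {ρ : NewV q (Fin q) ↪ W} {σQ : Fin q → V} {Q : Finset V}
    {S₀ : Finset W} {x : NewV q V}
    (h : Sum.inl x ∈ S₀.image (jmap q ρ σQ Q)) :
    ∃ x₀, ρ x₀ ∈ S₀ ∧ coreMap q σQ x₀ = x := by
  obtain ⟨w, hw, hjw⟩ := Finset.mem_image.mp h
  obtain ⟨x₀, rfl, hcm⟩ := jmap_eq_inl hjw
  exact ⟨x₀, hw, hcm⟩

lemma image_jmap_inr {q : ℕ} {ρ : NewV q (Fin q) ↪ W} {σQ : Fin q → V} {Q Q' : Finset V}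
    {S₀ : Finset W} {w₀ : W}
    (h : Sum.inr (Q', w₀) ∈ S₀.image (jmap q ρ σQ Q)) :
    w₀ ∈ S₀ ∧ Q' = Q ∧ w₀ ∉ Set.range ρ := by
  obtain ⟨w, hw, hjw⟩ := Finset.mem_image.mp h
  obtain ⟨hnr, hp⟩ := jmap_eq_inr hjw
  obtain ⟨h1, h2⟩ := Prod.mk.injEq .. ▸ hp
  exact ⟨h2 ▸ hw, h1, h2 ▸ hnr⟩

lemma map_mem_cliqueEdges {q : ℕ} {σQ : Fin q → V} {Q : Finset V}
    (himg : ∀ i, σQ i ∈ Q) {g : Sym2 (Fin q)} {f : Sym2 V}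
    (hmap : Sym2.map σQ g = f) (hnd : ¬f.IsDiag) : f ∈ cliqueEdges Q := by
  subst hmap
  refine ⟨hnd, fun v hv => ?_⟩
  obtain ⟨i, _, rfl⟩ := Sym2.mem_map.mp hv
  exact himg i

/-- the canonical pullback of a gadget edge through `coreMap`. -/
lemma pullback_exists {q : ℕ} {σQ : Fin q → V} (hinj : Function.Injective σQ)
    {Q : Finset V} (hsurjQ : ∀ u ∈ Q, ∃ i, σQ i = u) {f : Sym2 V} (hfQ : f ∈ cliqueEdges Q)
    {x y : NewV q V}
    (hstruct : (∃ u i, u ∈ f ∧ ((x = Sum.inl u ∧ y = Sum.inr (f,i)) ∨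
        (y = Sum.inl u ∧ x = Sum.inr (f,i)))) ∨
        (∃ i j : Fin (q-2), x = Sum.inr (f,i) ∧ y = Sum.inr (f,j)))
    (hne : x ≠ y) :
    ∃ x₀ y₀, (nabla q (⊤ : SimpleGraph (Fin q))).Adj x₀ y₀ ∧
      coreMap q σQ x₀ = x ∧ coreMap q σQ y₀ = y := by
  induction f with
  | _ u₁ v₁ =>
    rw [mem_cliqueEdges] at hfQ
    obtain ⟨huv, hu₁, hv₁⟩ := hfQ
    obtain ⟨i, hi⟩ := hsurjQ u₁ hu₁
    obtain ⟨j, hj⟩ := hsurjQ v₁ hv₁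
    have hij : i ≠ j := fun hc => huv (by rw [← hi, ← hj, hc])
    have hmap : Sym2.map σQ s(i,j) = s(u₁,v₁) := by rw [Sym2.map_pair_eq, hi, hj]
    have htop : s(i,j) ∈ (⊤ : SimpleGraph (Fin q)).edgeSet := by
      rw [SimpleGraph.edgeSet_top]; simpa using hij
    rcases hstruct with ⟨u, t, hu, hc⟩ | ⟨t, t', hx, hy⟩
    · have hcases : u = u₁ ∨ u = v₁ := Sym2.mem_iff.mp hu
      rcases hc with ⟨hx, hy⟩ | ⟨hy, hx⟩
      · rcases hcases with rfl | rfl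
        · refine ⟨Sum.inl i, Sum.inr (s(i,j), t), ?_, by simp [coreMap, hi, hx], by simp [coreMap, hmap, hy]⟩
          rw [nabla_adj]
          exact ⟨by simp, s(i,j), htop, Or.inl ⟨i, t, by simp, Or.inl ⟨rfl, rfl⟩⟩⟩
        · refine ⟨Sum.inl j, Sum.inr (s(i,j), t), ?_, by simp [coreMap, hj, hx], by simp [coreMap, hmap, hy]⟩
          rw [nabla_adj]
          exact ⟨by simp, s(i,j), htop, Or.inl ⟨j, t, by simp, Or.inl ⟨rfl, rfl⟩⟩⟩
      · rcases hcases with rfl | rfl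
        · refine ⟨Sum.inr (s(i,j), t), Sum.inl i, ?_, by simp [coreMap, hmap, hx], by simp [coreMap, hi, hy]⟩
          rw [nabla_adj]
          exact ⟨by simp, s(i,j), htop, Or.inl ⟨i, t, by simp, Or.inr ⟨rfl, rfl⟩⟩⟩
        · refine ⟨Sum.inr (s(i,j), t), Sum.inl j, ?_, by simp [coreMap, hmap, hx], by simp [coreMap, hj, hy]⟩
          rw [nabla_adj]
          exact ⟨by simp, s(i,j), htop, Or.inl ⟨j, t, by simp, Or.inr ⟨rfl, rfl⟩⟩⟩
    · have htt : t ≠ t' := by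
        rintro rfl; exact hne (hx.trans hy.symm)
      refine ⟨Sum.inr (s(i,j), t), Sum.inr (s(i,j), t'), ?_, by simp [coreMap, hmap, hx],
        by simp [coreMap, hmap, hy]⟩
      rw [nabla_adj]
      exact ⟨by simpa using htt, s(i,j), htop, Or.inr ⟨t, t', rfl, rfl⟩⟩

lemma struct_gadget_pull {q : ℕ} {σQ : Fin q → V} {f : Sym2 V} {x y : NewV q V}
    {x₀ y₀ : NewV q (Fin q)}
    (hstruct : (∃ u i, u ∈ f ∧ ((x = Sum.inl u ∧ y = Sum.inr (f,i)) ∨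
        (y = Sum.inl u ∧ x = Sum.inr (f,i)))) ∨
        (∃ i j : Fin (q-2), x = Sum.inr (f,i) ∧ y = Sum.inr (f,j)))
    (hx₀ : coreMap q σQ x₀ = x) (hy₀ : coreMap q σQ y₀ = y) :
    ∃ g, Sym2.map σQ g = f := by
  rcases hstruct with ⟨u, t, hu, ⟨hx, hy⟩ | ⟨hy, hx⟩⟩ | ⟨t, t', hx, hy⟩
  · obtain ⟨g, _, hg⟩ := coreMap_eq_inr (f := f) (t := t) (hy₀.trans hy)
    exact ⟨g, hg⟩
  · obtain ⟨g, _, hg⟩ := coreMap_eq_inr (f := f) (t := t) (hx₀.trans hx)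
    exact ⟨g, hg⟩
  · obtain ⟨g, _, hg⟩ := coreMap_eq_inr (f := f) (t := t) (hx₀.trans hx)
    exact ⟨g, hg⟩

end Part2b

section Part2c
set_option linter.unusedSectionVars false
variable {V W : Type} [Fintype V] [DecidableEq V] [Fintype W] [DecidableEq W]

lemma isNClique_Tcl {q : ℕ} (hq : 3 ≤ q) {L A M : SimpleGraph V} {B : SimpleGraph W}
    {ρ : NewV q (Fin q) → W} {σ : Finset V → Fin q → V} {𝒬 : Set (Finset V)}
    (hMle : M ≤ L) {f : Sym2 V} (hf : f ∈ M.edgeSet) :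
    (M.map ((Function.Embedding.inl : V ↪ NewV q V).trans
        (Function.Embedding.inl : NewV q V ↪ NewV q V ⊕ (Finset V × W)))
      ⊔ gluedAbsorber q L A B ρ σ 𝒬).IsNClique q (Tcl q W f) := by
  have hfLA : f ∈ (L ⊔ A).edgeSet := by
    rw [SimpleGraph.edgeSet_sup]
    exact Or.inl (SimpleGraph.edgeSet_mono hMle hf)
  have hnd : ¬ f.IsDiag := SimpleGraph.not_isDiag_of_mem_edgeSet _ hf
  have hgadget : ∀ (u : V) (i : Fin (q-2)), u ∈ f →
      (gluedAbsorber q L A B ρ σ 𝒬).Adj (Sum.inl (Sum.inl u)) (Sum.inl (Sum.inr (f, i))) := by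
    intro u i hu
    rw [glued_adj]
    refine Or.inl ⟨_, _, ?_, rfl, rfl⟩
    rw [← nabla_sup, nabla_adj]
    exact ⟨by simp, f, hfLA, Or.inl ⟨u, i, hu, Or.inl ⟨rfl, rfl⟩⟩⟩
  constructor
  · intro a ha b hb hne
    rw [Finset.mem_coe, mem_Tcl] at ha hb
    rw [SimpleGraph.sup_adj]
    rcases ha with ⟨u, hu, rfl⟩ | ⟨i, rfl⟩ <;> rcases hb with ⟨u', hu', rfl⟩ | ⟨i', rfl⟩
    · have huu : u ≠ u' := by simpa using hne
      have hfeq : f = s(u, u') := (Sym2.mem_and_mem_iff huu).mp ⟨hu, hu'⟩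
      refine Or.inl ?_
      rw [SimpleGraph.map_adj]
      exact ⟨u, u', by rwa [← SimpleGraph.mem_edgeSet, ← hfeq], rfl, rfl⟩
    · exact Or.inr (hgadget u i' hu)
    · exact Or.inr (hgadget u' i hu').symm
    · have hii : i ≠ i' := by simpa using hne
      refine Or.inr ?_
      rw [glued_adj]
      refine Or.inl ⟨_, _, ?_, rfl, rfl⟩
      rw [← nabla_sup, nabla_adj]
      exact ⟨by simpa using hii, f, hfLA, Or.inr ⟨i, i', rfl, rfl⟩⟩
  · exact card_Tcl hq hnd

set_option maxHeartbeats 2000000 in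
lemma decomp_glued {q : ℕ} (hq : 3 ≤ q) {L A M GA : SimpleGraph V}
    {B : SimpleGraph W} {ρ : NewV q (Fin q) ↪ W}
    (hBind : ∀ u ∈ Set.range ρ, ∀ v ∈ Set.range ρ, ¬B.Adj u v)
    {σ : Finset V → Fin q → V} {𝒬 𝒬a : Set (Finset V)} (h𝒬a : 𝒬a ⊆ 𝒬)
    (hσ : ∀ Q ∈ 𝒬, Function.Injective (σ Q) ∧ ∀ i, σ Q i ∈ Q)
    (hQcl : ∀ Q ∈ 𝒬, (L ⊔ A).IsNClique q Q)
    (hMle : M ≤ L)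
    (hsplit : (L ⊔ A).edgeSet = M.edgeSet ∪ GA.edgeSet)
    (hdisj : ∀ f ∈ M.edgeSet, f ∉ GA.edgeSet)
    (hGA : IsKqDecomp q GA 𝒬a)
    {𝒟NB 𝒟B : Set (Finset W)}
    (hDNB : IsKqDecomp q ((nabla q (⊤ : SimpleGraph (Fin q))).map ρ ⊔ B) 𝒟NB)
    (hDB : IsKqDecomp q B 𝒟B) :
    IsKqDecomp q
      (M.map ((Function.Embedding.inl : V ↪ NewV q V).trans
        (Function.Embedding.inl : NewV q V ↪ NewV q V ⊕ (Finset V × W)))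
        ⊔ gluedAbsorber q L A B (⇑ρ) σ 𝒬)
      (({S' | ∃ f ∈ M.edgeSet, S' = Tcl q W f} ∪ copyFam q ρ σ 𝒬a 𝒟NB) ∪
        copyFam q ρ σ (𝒬 \ 𝒬a) 𝒟B) := by
  obtain ⟨hDNBcl, hDNBcov⟩ := hDNB
  obtain ⟨hDBcl, hDBcov⟩ := hDB
  obtain ⟨hGAcl, hGAcov⟩ := hGA
  have hsurj : ∀ Q ∈ 𝒬, ∀ u ∈ Q, ∃ i, σ Q i = u := by
    intro Q hQ u hu
    have hinj := (hσ Q hQ).1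
    have himg : Finset.univ.image (σ Q) = Q := by
      apply Finset.eq_of_subset_of_card_le
      · intro x hx
        obtain ⟨i, _, rfl⟩ := Finset.mem_image.mp hx
        exact (hσ Q hQ).2 i
      · rw [Finset.card_image_of_injective _ hinj, Finset.card_univ, Fintype.card_fin,
          (hQcl Q hQ).2]
    rw [← himg] at hu
    obtain ⟨i, _, hi⟩ := Finset.mem_image.mp hu
    exact ⟨i, hi⟩
  have hQadj : ∀ Q ∈ 𝒬, ∀ i j : Fin q, i ≠ j → (L ⊔ A).Adj (σ Q i) (σ Q j) := by
    intro Q hQ i j hij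
    exact (hQcl Q hQ).1 (by exact (hσ Q hQ).2 i) (by exact (hσ Q hQ).2 j)
      (fun hc => hij ((hσ Q hQ).1 hc))
  have hfGAmem : ∀ Q ∈ 𝒬a, ∀ f, f ∈ cliqueEdges Q → f ∈ GA.edgeSet := by
    intro Q hQ f hf
    induction f with
    | _ u v =>
      rw [mem_cliqueEdges] at hf
      exact (SimpleGraph.mem_edgeSet _).mpr
        ((hGAcl Q hQ).1 (by exact hf.2.1) (by exact hf.2.2) hf.1)
  constructor
  · rintro S' hS'
    rcases hS' with (⟨f, hf, rfl⟩ | ⟨Q, hQ, S, hS, rfl⟩) | ⟨Q, hQ, S, hS, rfl⟩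
    · exact isNClique_Tcl hq hMle hf
    · exact (isNClique_image_jmap (h𝒬a hQ) ((hσ Q (h𝒬a hQ)).1) (hQadj Q (h𝒬a hQ))
        (hDNBcl S hS)).mono le_sup_right
    · exact (isNClique_image_jmap hQ.1 ((hσ Q hQ.1).1) (hQadj Q hQ.1)
        ((hDBcl S hS).mono le_sup_right)).mono le_sup_right
  · intro e he
    induction e with
    | _ a b =>
      rw [SimpleGraph.mem_edgeSet, SimpleGraph.sup_adj] at he
      rcases he with hM | hG
      · -- CASE M: an edge of `L` itself (core-core)
        rw [SimpleGraph.map_adj] at hM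
        obtain ⟨u, v, huv, ha, hb⟩ := hM
        have ha' : a = Sum.inl (Sum.inl u) := ha.symm
        have hb' : b = Sum.inl (Sum.inl v) := hb.symm
        subst ha'; subst hb'
        refine ⟨Tcl q W s(u,v), ⟨Or.inl (Or.inl ⟨s(u,v), huv, rfl⟩), ?_, ?_⟩, ?_⟩
        · simpa using huv.ne
        · intro t ht
          rcases Sym2.mem_iff.mp ht with rfl | rfl
          · exact mem_Tcl.mpr (Or.inl ⟨u, by simp, rfl⟩)
          · exact mem_Tcl.mpr (Or.inl ⟨v, by simp, rfl⟩)
        · rintro S'' ⟨hmem'', hcov''⟩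
          obtain ⟨hnd'', hsub''⟩ := hcov''
          have hua : Sum.inl (Sum.inl u) ∈ S'' := hsub'' _ (by simp)
          have hvb : Sum.inl (Sum.inl v) ∈ S'' := hsub'' _ (by simp)
          rcases hmem'' with (⟨f'', hf'', rfl⟩ | ⟨Q'', hQ'', S₀'', hS₀'', rfl⟩) |
            ⟨Q'', hQ'', S₀'', hS₀'', rfl⟩
          · rw [mem_Tcl] at hua hvb
            have hu'' : u ∈ f'' := by
              rcases hua with ⟨u', hu', h⟩ | ⟨i, h⟩
              · rwa [show u = u' by simpa using h]
              · exact absurd h (by simp)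
            have hv'' : v ∈ f'' := by
              rcases hvb with ⟨u', hu', h⟩ | ⟨i, h⟩
              · rwa [show v = u' by simpa using h]
              · exact absurd h (by simp)
            rw [(Sym2.mem_and_mem_iff huv.ne).mp ⟨hu'', hv''⟩]
          · obtain ⟨x₀, hx₀S, hx₀⟩ := image_jmap_inl hua
            obtain ⟨y₀, hy₀S, hy₀⟩ := image_jmap_inl hvb
            obtain ⟨i, rfl, hsi⟩ := coreMap_eq_inl hx₀
            obtain ⟨j, rfl, hsj⟩ := coreMap_eq_inl hy₀
            have hne₀ : (Sum.inl i : NewV q (Fin q)) ≠ Sum.inl j := by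
              intro hc
              have hij : i = j := by simpa using hc
              exact huv.ne (by rw [← hsi, ← hsj, hij])
            exact absurd (clique_roots_NB hBind (hDNBcl S₀'' hS₀'').1 hx₀S hy₀S hne₀)
              nabla_no_inl_inl
          · obtain ⟨x₀, hx₀S, hx₀⟩ := image_jmap_inl hua
            obtain ⟨y₀, hy₀S, hy₀⟩ := image_jmap_inl hvb
            have hne₀ : x₀ ≠ y₀ := by
              rintro rfl
              exact huv.ne (by simpa using hx₀.symm.trans hy₀)
            exact absurd (clique_roots_B hBind (hDBcl S₀'' hS₀'').1 hx₀S hy₀S hne₀) id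
      · rw [glued_adj] at hG
        rcases hG with ⟨x, y, hxy, rfl, rfl⟩ | ⟨hneab, Q₀, hQ₀, w, w', hBww, ha, hb⟩
        · -- CASE N: a gadget edge
          rw [← nabla_sup, nabla_adj] at hxy
          obtain ⟨hne, f, hfLA, hstruct⟩ := hxy
          have hnd : ¬ f.IsDiag := SimpleGraph.not_isDiag_of_mem_edgeSet _ hfLA
          have hfMA : f ∈ M.edgeSet ∪ GA.edgeSet := hsplit ▸ hfLA
          -- membership of the two endpoints in `Tcl f`
          have hmemT : Sum.inl x ∈ Tcl q W f ∧ Sum.inl y ∈ Tcl q W f := by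
            rcases hstruct with ⟨u, i, hu, ⟨rfl, rfl⟩ | ⟨rfl, rfl⟩⟩ | ⟨i, j, rfl, rfl⟩
            · exact ⟨mem_Tcl.mpr (Or.inl ⟨u, hu, rfl⟩), mem_Tcl.mpr (Or.inr ⟨i, rfl⟩)⟩
            · exact ⟨mem_Tcl.mpr (Or.inr ⟨i, rfl⟩), mem_Tcl.mpr (Or.inl ⟨u, hu, rfl⟩)⟩
            · exact ⟨mem_Tcl.mpr (Or.inr ⟨i, rfl⟩), mem_Tcl.mpr (Or.inr ⟨j, rfl⟩)⟩
          have hneab : (Sum.inl x : NewV q V ⊕ (Finset V × W)) ≠ Sum.inl y := by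
            simpa using hne
          rcases hfMA with hfM | hfGA
          · -- covered by the T-clique
            refine ⟨Tcl q W f, ⟨Or.inl (Or.inl ⟨f, hfM, rfl⟩), ?_, ?_⟩, ?_⟩
            · simpa using hneab
            · intro t ht
              rcases Sym2.mem_iff.mp ht with rfl | rfl
              · exact hmemT.1
              · exact hmemT.2
            · rintro S'' ⟨hmem'', hcov''⟩
              obtain ⟨hnd'', hsub''⟩ := hcov''
              have hxa : Sum.inl x ∈ S'' := hsub'' _ (by simp)
              have hyb : Sum.inl y ∈ S'' := hsub'' _ (by simp)
              rcases hmem'' with (⟨f'', hf'', rfl⟩ | ⟨Q'', hQ'', S₀'', hS₀'', rfl⟩) |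
                ⟨Q'', hQ'', S₀'', hS₀'', rfl⟩
              · -- identify f'' = f via a gadget endpoint
                have hf''f : f'' = f := by
                  rw [mem_Tcl] at hxa hyb
                  rcases hstruct with ⟨u, i, hu, ⟨rfl, rfl⟩ | ⟨rfl, rfl⟩⟩ | ⟨i, j, rfl, rfl⟩
                  · rcases hyb with ⟨u', _, h⟩ | ⟨i', h⟩
                    · exact absurd h (by simp)
                    · simp only [Sum.inl.injEq, Sum.inr.injEq, Prod.mk.injEq] at h
                      exact h.1.symm
                  · rcases hxa with ⟨u', _, h⟩ | ⟨i', h⟩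
                    · exact absurd h (by simp)
                    · simp only [Sum.inl.injEq, Sum.inr.injEq, Prod.mk.injEq] at h
                      exact h.1.symm
                  · rcases hxa with ⟨u', _, h⟩ | ⟨i', h⟩
                    · exact absurd h (by simp)
                    · simp only [Sum.inl.injEq, Sum.inr.injEq, Prod.mk.injEq] at h
                      exact h.1.symm
                rw [hf''f]
              · -- a copy clique cannot cover a gadget edge of an `M`-edge
                obtain ⟨x₀, hx₀S, hx₀⟩ := image_jmap_inl hxa
                obtain ⟨y₀, hy₀S, hy₀⟩ := image_jmap_inl hyb
                obtain ⟨g, hg⟩ := struct_gadget_pull hstruct hx₀ hy₀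
                have hfQ'' : f ∈ cliqueEdges Q'' :=
                  map_mem_cliqueEdges (fun i => (hσ Q'' (h𝒬a hQ'')).2 i) hg hnd
                exact absurd (hfGAmem Q'' hQ'' f hfQ'') (hdisj f hfM)
              · obtain ⟨x₀, hx₀S, hx₀⟩ := image_jmap_inl hxa
                obtain ⟨y₀, hy₀S, hy₀⟩ := image_jmap_inl hyb
                have hne₀ : x₀ ≠ y₀ := by
                  rintro rfl
                  exact hne (hx₀.symm.trans hy₀)
                exact absurd (clique_roots_B hBind (hDBcl S₀'' hS₀'').1 hx₀S hy₀S hne₀) id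
          · -- covered through a copy over the unique Q ∈ 𝒬a containing f
            obtain ⟨Q, ⟨hQa, hfQc⟩, hQuniq⟩ := hGAcov f hfGA
            have hQ𝒬 := h𝒬a hQa
            obtain ⟨x₀, y₀, hadj0, hx₀, hy₀⟩ := pullback_exists (hσ Q hQ𝒬).1
              (hsurj Q hQ𝒬) hfQc hstruct hne
            have he₀ : s(ρ x₀, ρ y₀) ∈
                ((nabla q (⊤ : SimpleGraph (Fin q))).map ρ ⊔ B).edgeSet := by
              rw [SimpleGraph.mem_edgeSet, SimpleGraph.sup_adj]
              exact Or.inl (by rw [SimpleGraph.map_adj]; exact ⟨x₀, y₀, hadj0, rfl, rfl⟩)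
            obtain ⟨S₀, ⟨hS₀, hcov₀⟩, hS₀uniq⟩ := hDNBcov _ he₀
            obtain ⟨hnd₀, hsub₀⟩ := hcov₀
            have hx₀S : ρ x₀ ∈ S₀ := hsub₀ _ (by simp)
            have hy₀S : ρ y₀ ∈ S₀ := hsub₀ _ (by simp)
            refine ⟨S₀.image (jmap q ρ (σ Q) Q), ⟨Or.inl (Or.inr ⟨Q, hQa, S₀, hS₀, rfl⟩),
              ?_, ?_⟩, ?_⟩
            · simpa using hneab
            · intro t ht
              rcases Sym2.mem_iff.mp ht with rfl | rfl
              · exact Finset.mem_image.mpr ⟨ρ x₀, hx₀S, by rw [jmap_rho, hx₀]⟩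
              · exact Finset.mem_image.mpr ⟨ρ y₀, hy₀S, by rw [jmap_rho, hy₀]⟩
            · rintro S'' ⟨hmem'', hcov''⟩
              obtain ⟨hnd'', hsub''⟩ := hcov''
              have hxa : Sum.inl x ∈ S'' := hsub'' _ (by simp)
              have hyb : Sum.inl y ∈ S'' := hsub'' _ (by simp)
              rcases hmem'' with (⟨f'', hf'', rfl⟩ | ⟨Q'', hQ'', S₀'', hS₀'', rfl⟩) |
                ⟨Q'', hQ'', S₀'', hS₀'', rfl⟩
              · -- T-clique impossible: f'' = f would be both an M- and GA-edge
                exfalso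
                have hf''f : f'' = f := by
                  rw [mem_Tcl] at hxa hyb
                  rcases hstruct with ⟨u, i, hu, ⟨rfl, rfl⟩ | ⟨rfl, rfl⟩⟩ | ⟨i, j, rfl, rfl⟩
                  · rcases hyb with ⟨u', _, h⟩ | ⟨i', h⟩
                    · exact absurd h (by simp)
                    · simp only [Sum.inl.injEq, Sum.inr.injEq, Prod.mk.injEq] at h
                      exact h.1.symm
                  · rcases hxa with ⟨u', _, h⟩ | ⟨i', h⟩
                    · exact absurd h (by simp)
                    · simp only [Sum.inl.injEq, Sum.inr.injEq, Prod.mk.injEq] at h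
                      exact h.1.symm
                  · rcases hxa with ⟨u', _, h⟩ | ⟨i', h⟩
                    · exact absurd h (by simp)
                    · simp only [Sum.inl.injEq, Sum.inr.injEq, Prod.mk.injEq] at h
                      exact h.1.symm
                exact hdisj f (hf''f ▸ hf'') hfGA
              · -- same family: identify Q'' = Q and S₀'' = S₀
                obtain ⟨x₀', hx₀S', hx₀'⟩ := image_jmap_inl hxa
                obtain ⟨y₀', hy₀S', hy₀'⟩ := image_jmap_inl hyb
                obtain ⟨g, hg⟩ := struct_gadget_pull hstruct hx₀' hy₀'
                have hfQ'' : f ∈ cliqueEdges Q'' :=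
                  map_mem_cliqueEdges (fun i => (hσ Q'' (h𝒬a hQ'')).2 i) hg hnd
                have hQeq : Q'' = Q := hQuniq Q'' ⟨hQ'', hfQ''⟩
                subst hQeq
                have hx₀e : x₀' = x₀ :=
                  coreMap_injective (hσ Q'' hQ𝒬).1 (hx₀'.trans hx₀.symm)
                have hy₀e : y₀' = y₀ :=
                  coreMap_injective (hσ Q'' hQ𝒬).1 (hy₀'.trans hy₀.symm)
                subst hx₀e; subst hy₀e
                have : S₀'' = S₀ := by
                  apply hS₀uniq
                  refine ⟨hS₀'', ?_, ?_⟩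
                  · simp only [Sym2.isDiag_iff_proj_eq]
                    intro hc
                    exact hne (by rw [← hx₀, ← hy₀, ρ.injective hc])
                  · intro t ht
                    rcases Sym2.mem_iff.mp ht with rfl | rfl
                    · exact hx₀S'
                    · exact hy₀S'
                rw [this]
              · exfalso
                obtain ⟨x₀', hx₀S', hx₀'⟩ := image_jmap_inl hxa
                obtain ⟨y₀', hy₀S', hy₀'⟩ := image_jmap_inl hyb
                have hne₀ : x₀' ≠ y₀' := by
                  rintro rfl
                  exact hne (hx₀'.symm.trans hy₀')
                exact clique_roots_B hBind (hDBcl S₀'' hS₀'').1 hx₀S' hy₀S' hne₀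
        · -- CASE B: an edge inside a copy of B
          have hwnr : w ∉ Set.range ρ ∨ w' ∉ Set.range ρ := by
            by_contra hc
            push_neg at hc
            exact hBind w hc.1 w' hc.2 hBww
          have hww' : w ≠ w' := hBww.ne
          have hcovmem : ∀ S₀ : Finset W, w ∈ S₀ → w' ∈ S₀ →
              s(a, b) ∈ cliqueEdges (S₀.image (jmap q ρ (σ Q₀) Q₀)) := by
            intro S₀ hw hw'
            refine ⟨by simpa using hneab, ?_⟩
            intro t ht
            rcases Sym2.mem_iff.mp ht with rfl | rfl
            · exact Finset.mem_image.mpr ⟨w, hw, ha.symm⟩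
            · exact Finset.mem_image.mpr ⟨w', hw', hb.symm⟩
          -- helper for the uniqueness part
          have hkey : ∀ S'' ∈ (({S' | ∃ f ∈ M.edgeSet, S' = Tcl q W f} ∪
                copyFam q ρ σ 𝒬a 𝒟NB) ∪ copyFam q ρ σ (𝒬 \ 𝒬a) 𝒟B),
              s(a, b) ∈ cliqueEdges S'' →
              ∃ hQm : (Q₀ ∈ 𝒬a ∧ ∃ S₀'' ∈ 𝒟NB, S'' = S₀''.image (jmap q ρ (σ Q₀) Q₀) ∧
                  w ∈ S₀'' ∧ w' ∈ S₀'') ∨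
                (Q₀ ∉ 𝒬a ∧ ∃ S₀'' ∈ 𝒟B, S'' = S₀''.image (jmap q ρ (σ Q₀) Q₀) ∧
                  w ∈ S₀'' ∧ w' ∈ S₀''), True := by
            intro S'' hmem'' hcov''
            obtain ⟨hnd'', hsub''⟩ := hcov''
            have hxa : a ∈ S'' := hsub'' _ (by simp)
            have hyb : b ∈ S'' := hsub'' _ (by simp)
            -- pick the non-root endpoint
            have hinr : ∃ w₀, w₀ ∉ Set.range ρ ∧
                ((Sum.inr (Q₀, w₀) : NewV q V ⊕ (Finset V × W)) ∈ S'') := by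
              rcases hwnr with h | h
              · exact ⟨w, h, by rwa [← jmap_not q ρ (σ Q₀) Q₀ h, ← ha]⟩
              · exact ⟨w', h, by rwa [← jmap_not q ρ (σ Q₀) Q₀ h, ← hb]⟩
            obtain ⟨w₀, hw₀nr, hw₀S⟩ := hinr
            rcases hmem'' with (⟨f'', hf'', rfl⟩ | ⟨Q'', hQ'', S₀'', hS₀'', rfl⟩) |
              ⟨Q'', hQ'', S₀'', hS₀'', rfl⟩
            · exfalso
              rcases mem_Tcl.mp hw₀S with ⟨u', _, h⟩ | ⟨i', h⟩ <;> exact absurd h (by simp)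
            · have hQeq : Q₀ = Q'' := (image_jmap_inr hw₀S).2.1
              subst hQeq
              have hwain : w ∈ S₀'' := by
                obtain ⟨wa, hwa, hjwa⟩ := Finset.mem_image.mp (ha ▸ hxa)
                rwa [← jmap_injective (hσ Q₀ (h𝒬a hQ'')).1 Q₀ hjwa]
              have hwbin : w' ∈ S₀'' := by
                obtain ⟨wb, hwb, hjwb⟩ := Finset.mem_image.mp (hb ▸ hyb)
                rwa [← jmap_injective (hσ Q₀ (h𝒬a hQ'')).1 Q₀ hjwb]
              exact ⟨Or.inl ⟨hQ'', S₀'', hS₀'', rfl, hwain, hwbin⟩, trivial⟩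
            · have hQeq : Q₀ = Q'' := (image_jmap_inr hw₀S).2.1
              subst hQeq
              have hwain : w ∈ S₀'' := by
                obtain ⟨wa, hwa, hjwa⟩ := Finset.mem_image.mp (ha ▸ hxa)
                rwa [← jmap_injective (hσ Q₀ hQ''.1).1 Q₀ hjwa]
              have hwbin : w' ∈ S₀'' := by
                obtain ⟨wb, hwb, hjwb⟩ := Finset.mem_image.mp (hb ▸ hyb)
                rwa [← jmap_injective (hσ Q₀ hQ''.1).1 Q₀ hjwb]
              exact ⟨Or.inr ⟨hQ''.2, S₀'', hS₀'', rfl, hwain, hwbin⟩, trivial⟩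
          by_cases hQ₀a : Q₀ ∈ 𝒬a
          · have he₀ : s(w, w') ∈
                ((nabla q (⊤ : SimpleGraph (Fin q))).map ρ ⊔ B).edgeSet := by
              rw [SimpleGraph.mem_edgeSet, SimpleGraph.sup_adj]
              exact Or.inr hBww
            obtain ⟨S₀, ⟨hS₀, hcov₀⟩, hS₀uniq⟩ := hDNBcov _ he₀
            obtain ⟨hnd₀, hsub₀⟩ := hcov₀
            refine ⟨S₀.image (jmap q ρ (σ Q₀) Q₀),
              ⟨Or.inl (Or.inr ⟨Q₀, hQ₀a, S₀, hS₀, rfl⟩),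
               hcovmem S₀ (hsub₀ _ (by simp)) (hsub₀ _ (by simp))⟩, ?_⟩
            rintro S'' ⟨hmem'', hcov''⟩
            obtain ⟨hc, -⟩ := hkey S'' hmem'' hcov''
            rcases hc with ⟨-, S₀'', hS₀'', rfl, hwin, hwin'⟩ | ⟨hno, -⟩
            · have : S₀'' = S₀ := by
                apply hS₀uniq
                refine ⟨hS₀'', by simpa using hww', ?_⟩
                intro t ht
                rcases Sym2.mem_iff.mp ht with rfl | rfl
                · exact hwin
                · exact hwin'
              rw [this]
            · exact absurd hQ₀a hno
          · have he₀ : s(w, w') ∈ B.edgeSet := (SimpleGraph.mem_edgeSet _).mpr hBww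
            obtain ⟨S₀, ⟨hS₀, hcov₀⟩, hS₀uniq⟩ := hDBcov _ he₀
            obtain ⟨hnd₀, hsub₀⟩ := hcov₀
            refine ⟨S₀.image (jmap q ρ (σ Q₀) Q₀),
              ⟨Or.inr ⟨Q₀, ⟨hQ₀, hQ₀a⟩, S₀, hS₀, rfl⟩,
               hcovmem S₀ (hsub₀ _ (by simp)) (hsub₀ _ (by simp))⟩, ?_⟩
            rintro S'' ⟨hmem'', hcov''⟩
            obtain ⟨hc, -⟩ := hkey S'' hmem'' hcov''
            rcases hc with ⟨hyes, -⟩ | ⟨-, S₀'', hS₀'', rfl, hwin, hwin'⟩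
            · exact absurd hyes hQ₀a
            · have : S₀'' = S₀ := by
                apply hS₀uniq
                refine ⟨hS₀'', by simpa using hww', ?_⟩
                intro t ht
                rcases Sym2.mem_iff.mp ht with rfl | rfl
                · exact hwin
                · exact hwin'
              rw [this]

end Part2c

section Part4a
set_option linter.unusedSectionVars false
open scoped Classical

lemma rootedDensitySet_bddAbove {W : Type} [Fintype W] (B : SimpleGraph W) (R : Set W) :
    BddAbove {x : ℝ | ∃ H' : B.Subgraph, (H'.verts \ R).Nonempty ∧
      x = (H'.edgeSet.ncard : ℝ) / ((H'.verts \ R).ncard : ℝ)} := by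
  refine ⟨(Fintype.card (Sym2 W) : ℝ), ?_⟩
  rintro x ⟨H', hne, rfl⟩
  have h1 : (1:ℝ) ≤ ((H'.verts \ R).ncard : ℝ) := by
    have := (Set.ncard_pos (Set.toFinite _)).mpr hne
    exact_mod_cast this
  have he : (H'.edgeSet.ncard : ℝ) ≤ (Fintype.card (Sym2 W) : ℝ) := by
    have h := Set.ncard_le_ncard (Set.subset_univ H'.edgeSet) (Set.toFinite _)
    rw [Set.ncard_univ, Nat.card_eq_fintype_card] at h
    exact_mod_cast h
  calc (H'.edgeSet.ncard : ℝ) / ((H'.verts \ R).ncard : ℝ)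
      ≤ (H'.edgeSet.ncard : ℝ) := div_le_self (by positivity) h1
    _ ≤ _ := he

lemma density2Set_bddAbove {W : Type} [Fintype W] (B : SimpleGraph W) :
    BddAbove {x : ℝ | ∃ H' : B.Subgraph, 3 ≤ H'.verts.ncard ∧
      x = ((H'.edgeSet.ncard : ℝ) - 1) / ((H'.verts.ncard : ℝ) - 2)} := by
  refine ⟨(Fintype.card (Sym2 W) : ℝ), ?_⟩
  rintro x ⟨H', h3, rfl⟩
  have h1 : (1:ℝ) ≤ ((H'.verts.ncard : ℝ)) - 2 := by
    have : (3:ℝ) ≤ (H'.verts.ncard : ℝ) := by exact_mod_cast h3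
    linarith
  have he : (H'.edgeSet.ncard : ℝ) ≤ (Fintype.card (Sym2 W) : ℝ) := by
    have h := Set.ncard_le_ncard (Set.subset_univ H'.edgeSet) (Set.toFinite _)
    rw [Set.ncard_univ, Nat.card_eq_fintype_card] at h
    exact_mod_cast h
  have hnum : (H'.edgeSet.ncard : ℝ) - 1 ≤ (Fintype.card (Sym2 W) : ℝ) := by linarith
  rcases le_or_gt ((H'.edgeSet.ncard : ℝ) - 1) 0 with h0 | h0
  · calc ((H'.edgeSet.ncard : ℝ) - 1) / ((H'.verts.ncard : ℝ) - 2)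
        ≤ 0 := div_nonpos_of_nonpos_of_nonneg h0 (by linarith)
      _ ≤ _ := by positivity
  · calc ((H'.edgeSet.ncard : ℝ) - 1) / ((H'.verts.ncard : ℝ) - 2)
        ≤ ((H'.edgeSet.ncard : ℝ) - 1) := div_le_self h0.le h1
      _ ≤ _ := hnum

lemma subgraph_rooted_bound {W : Type} [Fintype W] {B : SimpleGraph W} {R : Set W}
    (hind : ∀ u ∈ R, ∀ v ∈ R, ¬B.Adj u v) (H : B.Subgraph) :
    (H.edgeSet.ncard : ℝ) ≤ rootedDensity B R * ((H.verts \ R).ncard : ℝ) := by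
  by_cases hne : (H.verts \ R).Nonempty
  · have hmem : (H.edgeSet.ncard : ℝ) / ((H.verts \ R).ncard : ℝ) ∈
        {x : ℝ | ∃ H' : B.Subgraph, (H'.verts \ R).Nonempty ∧
          x = (H'.edgeSet.ncard : ℝ) / ((H'.verts \ R).ncard : ℝ)} := ⟨H, hne, rfl⟩
    have hle := le_csSup (rootedDensitySet_bddAbove B R) hmem
    have hpos : (0:ℝ) < ((H.verts \ R).ncard : ℝ) := by
      have := (Set.ncard_pos (Set.toFinite _)).mpr hne
      exact_mod_cast this
    rw [div_le_iff₀ hpos] at hle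
    exact hle
  · have hsub : H.verts ⊆ R := by
      intro v hv
      by_contra hc
      exact hne ⟨v, hv, hc⟩
    have hes : H.edgeSet = ∅ := by
      ext e
      induction e with
      | _ u v =>
        simp only [Set.mem_empty_iff_false, iff_false, SimpleGraph.Subgraph.mem_edgeSet]
        intro hadjz
        exact hind u (hsub hadjz.fst_mem) v (hsub hadjz.snd_mem) (H.adj_sub hadjz)
    rw [hes, Set.not_nonempty_iff_eq_empty.mp hne]
    simp

lemma subgraph_density2_bound {W : Type} [Fintype W] {B : SimpleGraph W} (H : B.Subgraph)
    (h3 : 3 ≤ H.verts.ncard) :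
    (H.edgeSet.ncard : ℝ) ≤ density2 B * ((H.verts.ncard : ℝ) - 2) + 1 := by
  have hmem : ((H.edgeSet.ncard : ℝ) - 1) / ((H.verts.ncard : ℝ) - 2) ∈
      {x : ℝ | ∃ H' : B.Subgraph, 3 ≤ H'.verts.ncard ∧
        x = ((H'.edgeSet.ncard : ℝ) - 1) / ((H'.verts.ncard : ℝ) - 2)} := ⟨H, h3, rfl⟩
  have hle := le_csSup (density2Set_bddAbove B) hmem
  have hpos : (0:ℝ) < (H.verts.ncard : ℝ) - 2 := by
    have : (3:ℝ) ≤ (H.verts.ncard : ℝ) := by exact_mod_cast h3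
    linarith
  rw [div_le_iff₀ hpos] at hle
  unfold density2
  linarith

end Part4a

section Part4b
set_option linter.unusedSectionVars false
set_option maxHeartbeats 4000000
open scoped Classical
open Finset

lemma two_mul_choose_two (n : ℕ) : 2 * n.choose 2 = n * (n - 1) := by
  induction n with
  | zero => simp
  | succ m ih =>
    rw [Nat.choose_succ_succ, Nat.mul_add, ih, Nat.choose_one_right]
    cases m with
    | zero => simp
    | succ k => simp [Nat.succ_sub_one]; ring

lemma choose_two_real (n : ℕ) : (n.choose 2 : ℝ) * 2 = (n:ℝ) * ((n:ℝ) - 1) := by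
  cases n with
  | zero => simp
  | succ m =>
    have h := two_mul_choose_two (m+1)
    have h1 : (m+1) * ((m+1) - 1) = (m+1) * m := by simp
    rw [h1, Nat.mul_comm] at h
    have h2 : (((m+1).choose 2 : ℕ) : ℝ) * 2 = (((m+1) * m : ℕ) : ℝ) := by
      exact_mod_cast congrArg (fun k : ℕ => (k:ℝ)) h
    rw [h2]
    push_cast
    ring

variable {V : Type} [Fintype V] [DecidableEq V]

/-- Structure of an edge of a subgraph of `nabla q X` with fixed gadget index. -/
lemma nabla_sub_edge_struct {q : ℕ} {X : SimpleGraph V} {H : (nabla q X).Subgraph}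
    {a b : NewV q V} (h : H.Adj a b) :
    ∃ f : Sym2 V,
      ((∃ u i, u ∈ f ∧ Sum.inl u ∈ H.verts ∧ Sum.inr (f,i) ∈ H.verts ∧
         s(a,b) = s(Sum.inl u, Sum.inr (f,i))) ∨
       (∃ i j, i ≠ j ∧ Sum.inr (f,i) ∈ H.verts ∧ Sum.inr (f,j) ∈ H.verts ∧
         s(a,b) = s((Sum.inr (f,i) : NewV q V), Sum.inr (f,j)))) ∧
      (∀ f' i', (Sum.inr (f',i') : NewV q V) ∈ s(a,b) → f' = f) := by
  have hma : a ∈ H.verts := h.fst_mem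
  have hmb : b ∈ H.verts := h.snd_mem
  have hadj := H.adj_sub h
  rw [nabla_adj] at hadj
  obtain ⟨hne, f, hf, hstruct⟩ := hadj
  refine ⟨f, ?_, ?_⟩
  · rcases hstruct with ⟨u, i, hu, ⟨rfl, rfl⟩ | ⟨rfl, rfl⟩⟩ | ⟨i, j, rfl, rfl⟩
    · exact Or.inl ⟨u, i, hu, hma, hmb, rfl⟩
    · exact Or.inl ⟨u, i, hu, hmb, hma, Sym2.eq_swap⟩
    · refine Or.inr ⟨i, j, by rintro rfl; exact hne rfl, hma, hmb, rfl⟩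
  · intro f' i' hmem
    rw [Sym2.mem_iff] at hmem
    rcases hstruct with ⟨u, i, hu, ⟨rfl, rfl⟩ | ⟨rfl, rfl⟩⟩ | ⟨i, j, rfl, rfl⟩ <;>
      rcases hmem with h' | h' <;> simp_all

lemma nab_bound {q : ℕ} (hq : 3 ≤ q) {X : SimpleGraph V} (H : (nabla q X).Subgraph) :
    ((H.edgeSet.ncard : ℝ) ≤ ((q:ℝ)+1)/2 * ((H.verts ∩ {t | t.isRight}).ncard : ℝ)) ∧
    (2 ≤ H.verts.ncard →
      (H.edgeSet.ncard : ℝ) ≤ ((q:ℝ)+1)/2 * ((H.verts.ncard : ℝ) - 2) + 1) := by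
  set E : Finset (Sym2 (NewV q V)) := H.edgeSet.toFinset with hE
  set KF : Sym2 V → Finset (Fin (q-2)) :=
    (fun f => Finset.univ.filter (fun i => (Sum.inr (f,i) : NewV q V) ∈ H.verts)) with hKF
  set CF : Sym2 V → Finset V :=
    (fun f => Finset.univ.filter (fun u => (Sum.inl u : NewV q V) ∈ H.verts ∧ u ∈ f)) with hCF
  set EF : Sym2 V → Finset (Sym2 (NewV q V)) :=
    (fun f => E.filter (fun e => ∃ i, (Sum.inr (f,i) : NewV q V) ∈ e)) with hEF
  set c : ℕ := (H.verts ∩ {t | t.isLeft}).ncard with hc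
  set g : ℕ := (H.verts ∩ {t | t.isRight}).ncard with hg
  -- the structure of an edge in `E`
  have estruct : ∀ e ∈ E, ∃ f : Sym2 V,
      ((∃ u i, u ∈ f ∧ Sum.inl u ∈ H.verts ∧ Sum.inr (f,i) ∈ H.verts ∧
         e = s(Sum.inl u, Sum.inr (f,i))) ∨
       (∃ i j, i ≠ j ∧ Sum.inr (f,i) ∈ H.verts ∧ Sum.inr (f,j) ∈ H.verts ∧
         e = s((Sum.inr (f,i) : NewV q V), Sum.inr (f,j)))) ∧
      (∀ f' i', (Sum.inr (f',i') : NewV q V) ∈ e → f' = f) := by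
    intro e he
    rw [hE, Set.mem_toFinset] at he
    induction e with
    | _ a b =>
      rw [SimpleGraph.Subgraph.mem_edgeSet] at he
      exact nabla_sub_edge_struct he
  -- edges partition according to the gadget index
  have hcover : E = Finset.univ.biUnion EF := by
    ext e
    simp only [Finset.mem_biUnion, Finset.mem_univ, true_and, hEF, Finset.mem_filter]
    constructor
    · intro he
      obtain ⟨f, hs, _⟩ := estruct e he
      refine ⟨f, he, ?_⟩
      rcases hs with ⟨u, i, _, _, _, rfl⟩ | ⟨i, j, _, _, _, rfl⟩
      · exact ⟨i, by simp⟩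
      · exact ⟨i, by simp⟩
    · rintro ⟨f, he, -⟩
      exact he
  have hdisj : ∀ f ∈ (Finset.univ : Finset (Sym2 V)), ∀ f' ∈ Finset.univ, f ≠ f' →
      Disjoint (EF f) (EF f') := by
    intro f _ f' _ hne
    rw [Finset.disjoint_left]
    rintro e he he'
    rw [hEF, Finset.mem_filter] at he he'
    obtain ⟨f₀, _, huniq⟩ := estruct e he.1
    obtain ⟨i, hi⟩ := he.2
    obtain ⟨i', hi'⟩ := he'.2
    exact hne ((huniq f i hi).trans (huniq f' i' hi').symm)
  have hcard : E.card = ∑ f : Sym2 V, (EF f).card := by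
    rw [hcover]; exact Finset.card_biUnion hdisj
  -- per-gadget counting
  have hperf : ∀ f : Sym2 V, (EF f).card ≤ (CF f).card * (KF f).card + (KF f).card.choose 2 := by
    intro f
    have hsplit := Finset.card_filter_add_card_filter_not
      (s := EF f) (p := fun e => ∃ u : V, (Sum.inl u : NewV q V) ∈ e)
    have h1 : ((EF f).filter (fun e => ∃ u : V, (Sum.inl u : NewV q V) ∈ e)).card ≤
        (CF f).card * (KF f).card := by
      calc ((EF f).filter (fun e => ∃ u : V, (Sum.inl u : NewV q V) ∈ e)).card
          ≤ (((CF f) ×ˢ (KF f)).image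
              (fun pr => s((Sum.inl pr.1 : NewV q V), Sum.inr (f, pr.2)))).card := by
            apply Finset.card_le_card
            intro e he
            rw [Finset.mem_filter] at he
            obtain ⟨hef, u, hu⟩ := he
            rw [hEF, Finset.mem_filter] at hef
            obtain ⟨heE, i₀, hi₀⟩ := hef
            obtain ⟨f₀, hs, huniq⟩ := estruct e heE
            have hff : f₀ = f := (huniq f i₀ hi₀).symm
            rw [hff] at hs
            rcases hs with ⟨u₁, i₁, hu₁f, hu₁v, hi₁v, rfl⟩ | ⟨i, j, hij, _, _, rfl⟩
            · refine Finset.mem_image.mpr ⟨(u₁, i₁), ?_, rfl⟩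
              rw [Finset.mem_product, hCF, hKF]
              exact ⟨Finset.mem_filter.mpr ⟨Finset.mem_univ _, hu₁v, hu₁f⟩,
                Finset.mem_filter.mpr ⟨Finset.mem_univ _, hi₁v⟩⟩
            · exfalso
              rw [Sym2.mem_iff] at hu
              rcases hu with h' | h' <;> exact absurd h' (by simp)
        _ ≤ ((CF f) ×ˢ (KF f)).card := Finset.card_image_le
        _ = (CF f).card * (KF f).card := Finset.card_product _ _
    have h2 : ((EF f).filter (fun e => ¬ ∃ u : V, (Sum.inl u : NewV q V) ∈ e)).card ≤
        (KF f).card.choose 2 := by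
      calc ((EF f).filter (fun e => ¬ ∃ u : V, (Sum.inl u : NewV q V) ∈ e)).card
          ≤ ((KF f).powersetCard 2).card := by
            apply Finset.card_le_card_of_injOn
              (fun e => Finset.univ.filter (fun i => (Sum.inr (f,i) : NewV q V) ∈ e))
            · intro e he
              rw [Finset.mem_coe, Finset.mem_filter] at he
              obtain ⟨hef, hnoinl⟩ := he
              rw [hEF, Finset.mem_filter] at hef
              obtain ⟨heE, i₀, hi₀⟩ := hef
              obtain ⟨f₀, hs, huniq⟩ := estruct e heE
              have hff : f₀ = f := (huniq f i₀ hi₀).symm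
              rw [hff] at hs
              rcases hs with ⟨u₁, i₁, _, _, _, rfl⟩ | ⟨i, j, hij, hiv, hjv, rfl⟩
              · exact absurd ⟨u₁, by simp⟩ hnoinl
              · rw [Finset.mem_coe, Finset.mem_powersetCard]
                constructor
                · intro t ht
                  rw [Finset.mem_filter] at ht
                  rw [hKF, Finset.mem_filter]
                  refine ⟨Finset.mem_univ _, ?_⟩
                  rcases Sym2.mem_iff.mp ht.2 with h' | h'
                  · rw [show t = i by simpa using h']; exact hiv
                  · rw [show t = j by simpa using h']; exact hjv
                · have : Finset.univ.filter
                      (fun t => (Sum.inr (f,t) : NewV q V) ∈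
                        s((Sum.inr (f,i) : NewV q V), Sum.inr (f,j))) = {i, j} := by
                    ext t
                    simp [Sym2.mem_iff]
                  beta_reduce
                  rw [this, Finset.card_insert_of_notMem (by simpa using hij),
                    Finset.card_singleton]
            · rintro e he e' he' heq
              simp only [Finset.coe_filter, Set.mem_setOf_eq] at he he'
              obtain ⟨hef, hnoinl⟩ := he
              obtain ⟨hef', hnoinl'⟩ := he'
              rw [hEF, Finset.mem_filter] at hef hef'
              obtain ⟨heE, i₀, hi₀⟩ := hef
              obtain ⟨heE', i₀', hi₀'⟩ := hef'
              obtain ⟨f₀, hs, huniq⟩ := estruct e heE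
              have hff : f₀ = f := (huniq f i₀ hi₀).symm
              rw [hff] at hs
              obtain ⟨f₀', hs', huniq'⟩ := estruct e' heE'
              have hff' : f₀' = f := (huniq' f i₀' hi₀').symm
              rw [hff'] at hs'
              rcases hs with ⟨u₁, i₁, _, _, _, rfl⟩ | ⟨i, j, hij, _, _, rfl⟩
              · exact absurd ⟨u₁, by simp⟩ hnoinl
              rcases hs' with ⟨u₁', i₁', _, _, _, rfl⟩ | ⟨i', j', hij', _, _, rfl⟩
              · exact absurd ⟨u₁', by simp⟩ hnoinl'
              have hmem : ∀ t : Fin (q-2),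
                  ((Sum.inr (f,t) : NewV q V) ∈ s((Sum.inr (f,i) : NewV q V), Sum.inr (f,j))) ↔
                  ((Sum.inr (f,t) : NewV q V) ∈ s((Sum.inr (f,i') : NewV q V), Sum.inr (f,j'))) := by
                intro t
                have := Finset.ext_iff.mp heq t
                simpa using this
              have hi'm : i' = i ∨ i' = j := by
                have := (hmem i').mpr (by simp)
                simpa using this
              have hj'm : j' = i ∨ j' = j := by
                have := (hmem j').mpr (by simp)
                simpa using this
              have hcase : (i' = i ∧ j' = j) ∨ (i' = j ∧ j' = i) := by
                rcases hi'm with h1 | h1 <;> rcases hj'm with h2 | h2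
                · exact absurd (h1.trans h2.symm) hij'
                · exact Or.inl ⟨h1, h2⟩
                · exact Or.inr ⟨h1, h2⟩
                · exact absurd (h1.trans h2.symm) hij'
              rcases hcase with ⟨rfl, rfl⟩ | ⟨rfl, rfl⟩
              · rfl
              · exact Sym2.eq_swap
        _ = (KF f).card.choose 2 := Finset.card_powersetCard 2 (KF f)
    omega
  -- cardinality bounds
  have hKFle : ∀ f : Sym2 V, (KF f).card ≤ q - 2 := by
    intro f
    calc (KF f).card ≤ (Finset.univ : Finset (Fin (q-2))).card := Finset.card_filter_le _ _
      _ = q - 2 := by rw [Finset.card_univ, Fintype.card_fin]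
  have hCFle2 : ∀ f : Sym2 V, (CF f).card ≤ 2 := by
    intro f
    induction f with
    | _ u v =>
      have hsub : CF s(u,v) ⊆ {u, v} := by
        intro w hw
        rw [hCF, Finset.mem_filter] at hw
        rcases Sym2.mem_iff.mp hw.2.2 with rfl | rfl
        · exact Finset.mem_insert_self _ _
        · exact Finset.mem_insert_of_mem (Finset.mem_singleton_self _)
      calc (CF s(u,v)).card ≤ ({u,v} : Finset V).card := Finset.card_le_card hsub
        _ ≤ 2 := by
          have := Finset.card_insert_le u ({v} : Finset V)
          simpa using this
  have hCFlec : ∀ f : Sym2 V, (CF f).card ≤ c := by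
    intro f
    rw [hc, Set.ncard_eq_toFinset_card']
    apply Finset.card_le_card_of_injOn (fun u => (Sum.inl u : NewV q V))
    · intro u hu
      rw [hCF, Finset.mem_coe, Finset.mem_filter] at hu
      rw [Finset.mem_coe, Set.mem_toFinset]
      exact ⟨hu.2.1, rfl⟩
    · intro a _ b _ h
      simpa using h
  have hgsum : g = ∑ f : Sym2 V, (KF f).card := by
    rw [hg, Set.ncard_eq_toFinset_card']
    have hun : (H.verts ∩ {t | t.isRight}).toFinset =
        Finset.univ.biUnion
          (fun f : Sym2 V => (KF f).image (fun i => (Sum.inr (f,i) : NewV q V))) := by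
      ext t
      rw [Set.mem_toFinset]
      constructor
      · rintro ⟨hv, hr⟩
        cases t with
        | inl u => simp at hr
        | inr p =>
          refine Finset.mem_biUnion.mpr ⟨p.1, Finset.mem_univ _,
            Finset.mem_image.mpr ⟨p.2, ?_, rfl⟩⟩
          rw [hKF]
          exact Finset.mem_filter.mpr ⟨Finset.mem_univ _, hv⟩
      · intro ht
        obtain ⟨f, -, ht⟩ := Finset.mem_biUnion.mp ht
        obtain ⟨i, hi, rfl⟩ := Finset.mem_image.mp ht
        rw [hKF, Finset.mem_filter] at hi
        exact ⟨hi.2, rfl⟩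
    rw [hun, Finset.card_biUnion]
    · apply Finset.sum_congr rfl
      intro f _
      apply Finset.card_image_of_injective
      intro a b h
      simpa using h
    · intro f _ f' _ hne
      rw [Function.onFun, Finset.disjoint_left]
      rintro t ht ht'
      obtain ⟨i, -, rfl⟩ := Finset.mem_image.mp ht
      obtain ⟨i', -, h⟩ := Finset.mem_image.mp ht'
      simp only [Sum.inr.injEq, Prod.mk.injEq] at h
      exact hne h.1.symm
  have hvsplit : H.verts.ncard = c + g := by
    have hdisj2 : Disjoint (H.verts ∩ {t | t.isLeft}) (H.verts ∩ {t | t.isRight}) := by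
      rw [Set.disjoint_left]
      rintro t ⟨-, hL⟩ ⟨-, hR⟩
      cases t with
      | inl u => simp at hR
      | inr p => simp at hL
    have hun : H.verts ∩ {t | t.isLeft} ∪ H.verts ∩ {t | t.isRight} = H.verts := by
      ext t
      simp only [Set.mem_union, Set.mem_inter_iff, Set.mem_setOf_eq]
      constructor
      · rintro (⟨hv, -⟩ | ⟨hv, -⟩) <;> exact hv
      · intro hv
        cases t with
        | inl u => exact Or.inl ⟨hv, rfl⟩
        | inr p => exact Or.inr ⟨hv, rfl⟩
    rw [hc, hg, ← Set.ncard_union_eq hdisj2 (Set.toFinite _) (Set.toFinite _), hun]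
  have hecard : H.edgeSet.ncard = E.card := Set.ncard_eq_toFinset_card' _
  -- real casts and per-f real bounds
  have hkR : ∀ f : Sym2 V, ((KF f).card : ℝ) ≤ (q:ℝ) - 2 := by
    intro f
    have h2q : (2:ℕ) ≤ q := by omega
    have := hKFle f
    calc ((KF f).card : ℝ) ≤ ((q - 2 : ℕ) : ℝ) := by exact_mod_cast this
      _ = (q:ℝ) - 2 := by rw [Nat.cast_sub h2q]; norm_num
  have hperfR : ∀ f : Sym2 V, ((EF f).card : ℝ) ≤ ((q:ℝ)+1)/2 * ((KF f).card : ℝ) := by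
    intro f
    have h := hperf f
    have hcast : ((EF f).card : ℝ) ≤ ((CF f).card : ℝ) * ((KF f).card : ℝ) +
        (((KF f).card.choose 2 : ℕ) : ℝ) := by exact_mod_cast h
    have hch := choose_two_real (KF f).card
    have hc2 : ((CF f).card : ℝ) ≤ 2 := by exact_mod_cast hCFle2 f
    have hk0 : (0:ℝ) ≤ ((KF f).card : ℝ) := by exact Nat.cast_nonneg _
    nlinarith [hkR f, mul_le_mul_of_nonneg_right hc2 hk0,
      mul_le_mul_of_nonneg_right (hkR f) hk0]
  have hEtotR : ((H.edgeSet.ncard : ℕ) : ℝ) = ∑ f : Sym2 V, ((EF f).card : ℝ) := by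
    rw [hecard, hcard]
    push_cast
    rfl
  have hgR : ((g:ℕ) : ℝ) = ∑ f : Sym2 V, ((KF f).card : ℝ) := by
    rw [hgsum]
    push_cast
    rfl
  constructor
  · rw [hEtotR]
    calc ∑ f : Sym2 V, ((EF f).card : ℝ)
        ≤ ∑ f : Sym2 V, ((q:ℝ)+1)/2 * ((KF f).card : ℝ) :=
          Finset.sum_le_sum (fun f _ => hperfR f)
      _ = ((q:ℝ)+1)/2 * ((g:ℕ) : ℝ) := by rw [hgR, Finset.mul_sum]
  · intro hs2
    rw [hvsplit] at hs2 ⊢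
    have hq1 : (0:ℝ) ≤ ((q:ℝ)+1)/2 := by positivity
    have hcgR : ((c + g : ℕ) : ℝ) = (c:ℝ) + (g:ℝ) := by push_cast; rfl
    rw [hcgR]
    rcases le_or_gt 2 c with hc2 | hc2
    · -- at least two core vertices: the crude bound suffices
      have hbound : ((H.edgeSet.ncard : ℕ) : ℝ) ≤ ((q:ℝ)+1)/2 * (g:ℝ) := by
        rw [hEtotR]
        calc ∑ f : Sym2 V, ((EF f).card : ℝ)
            ≤ ∑ f : Sym2 V, ((q:ℝ)+1)/2 * ((KF f).card : ℝ) :=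
              Finset.sum_le_sum (fun f _ => hperfR f)
          _ = ((q:ℝ)+1)/2 * (g:ℝ) := by rw [hgR, Finset.mul_sum]
      have hgle : (g:ℝ) ≤ (c:ℝ) + (g:ℝ) - 2 := by
        have : (2:ℝ) ≤ (c:ℝ) := by exact_mod_cast hc2
        linarith
      nlinarith [mul_le_mul_of_nonneg_left hgle hq1]
    · -- at most one core vertex
      have hcle1 : c ≤ 1 := by omega
      have hcR1 : (c:ℝ) ≤ 1 := by exact_mod_cast hcle1
      by_cases hBig : ∃ f : Sym2 V, 2 ≤ (KF f).card
      · obtain ⟨f₁, hf₁⟩ := hBig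
        -- refined bound at f₁
        have hstar : ((EF f₁).card : ℝ) ≤
            ((q:ℝ)+1)/2 * (((KF f₁).card : ℝ) + (c:ℝ) - 2) + 1 := by
          have h := hperf f₁
          have hcast : ((EF f₁).card : ℝ) ≤ ((CF f₁).card : ℝ) * ((KF f₁).card : ℝ) +
              (((KF f₁).card.choose 2 : ℕ) : ℝ) := by exact_mod_cast h
          have hch := choose_two_real (KF f₁).card
          have hcc : ((CF f₁).card : ℝ) ≤ (c:ℝ) := by exact_mod_cast hCFlec f₁
          have hk2 : (2:ℝ) ≤ ((KF f₁).card : ℝ) := by exact_mod_cast hf₁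
          have hk0 : (0:ℝ) ≤ ((KF f₁).card : ℝ) := by exact Nat.cast_nonneg _
          have hkq := hkR f₁
          have hqR : (3:ℝ) ≤ (q:ℝ) := by exact_mod_cast hq
          have hcR0 : (0:ℝ) ≤ (c:ℝ) := by positivity
          nlinarith [mul_le_mul_of_nonneg_right hcc hk0,
            mul_nonneg (sub_nonneg.mpr hk2) (sub_nonneg.mpr hkq),
            mul_nonneg (sub_nonneg.mpr hcR1) (sub_nonneg.mpr hk2),
            mul_le_mul_of_nonneg_right hcR1 hk0]
        have hrest : ∑ f ∈ Finset.univ.erase f₁, ((EF f).card : ℝ) ≤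
            ((q:ℝ)+1)/2 * ∑ f ∈ Finset.univ.erase f₁, ((KF f).card : ℝ) := by
          rw [Finset.mul_sum]
          exact Finset.sum_le_sum (fun f _ => hperfR f)
        have hsplitsum : ∑ f : Sym2 V, ((EF f).card : ℝ) =
            ((EF f₁).card : ℝ) + ∑ f ∈ Finset.univ.erase f₁, ((EF f).card : ℝ) :=
          (Finset.add_sum_erase _ _ (Finset.mem_univ f₁)).symm
        have hsplitg : ((g:ℕ) : ℝ) =
            ((KF f₁).card : ℝ) + ∑ f ∈ Finset.univ.erase f₁, ((KF f).card : ℝ) := by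
          rw [hgR]
          exact (Finset.add_sum_erase _ _ (Finset.mem_univ f₁)).symm
        rw [hEtotR, hsplitsum]
        have := hstar
        nlinarith [hrest, hsplitg]
      · -- all gadget classes have at most one vertex: no gadget-gadget edges
        push_neg at hBig
        have hnoch : ∀ f : Sym2 V, (KF f).card.choose 2 = 0 := by
          intro f
          have := hBig f
          interval_cases h : (KF f).card <;> simp
        have hEb : ∀ f : Sym2 V, ((EF f).card : ℝ) ≤ (c:ℝ) * ((KF f).card : ℝ) := by
          intro f
          have h := hperf f
          rw [hnoch f] at h
          have hcast : ((EF f).card : ℝ) ≤ ((CF f).card : ℝ) * ((KF f).card : ℝ) := by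
            exact_mod_cast h
          have hcc : ((CF f).card : ℝ) ≤ (c:ℝ) := by exact_mod_cast hCFlec f
          have hk0 : (0:ℝ) ≤ ((KF f).card : ℝ) := by exact Nat.cast_nonneg _
          nlinarith [mul_le_mul_of_nonneg_right hcc hk0]
        have htot : ((H.edgeSet.ncard : ℕ) : ℝ) ≤ (c:ℝ) * (g:ℝ) := by
          rw [hEtotR]
          calc ∑ f : Sym2 V, ((EF f).card : ℝ)
              ≤ ∑ f : Sym2 V, (c:ℝ) * ((KF f).card : ℝ) :=
                Finset.sum_le_sum (fun f _ => hEb f)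
            _ = (c:ℝ) * (g:ℝ) := by rw [hgR, Finset.mul_sum]
        have hqR : (3:ℝ) ≤ (q:ℝ) := by exact_mod_cast hq
        have hcg2 : (2:ℝ) ≤ (c:ℝ) + (g:ℝ) := by exact_mod_cast hs2
        have hg0 : (0:ℝ) ≤ (g:ℝ) := by positivity
        have hc01 : c = 0 ∨ c = 1 := by omega
        rcases hc01 with hc0 | hc0 <;> rw [hc0] at htot hcg2 ⊢ <;>
          push_cast at htot hcg2 ⊢
        · nlinarith [mul_nonneg (by positivity : (0:ℝ) ≤ ((q:ℝ)+1)/2)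
            (by linarith : (0:ℝ) ≤ (g:ℝ) - 2)]
        · nlinarith [mul_nonneg (by linarith : (0:ℝ) ≤ ((q:ℝ)+1)/2 - 1)
            (by linarith : (0:ℝ) ≤ (g:ℝ) - 1)]


end Part4b

section Part4c
set_option linter.unusedSectionVars false
set_option maxHeartbeats 4000000
open scoped Classical
open Finset

variable {V W : Type} [Fintype V] [DecidableEq V] [Fintype W] [DecidableEq W]

lemma subgraph_small_edge {α : Type} [Fintype α] {G : SimpleGraph α} (H : G.Subgraph)
    (h2 : H.verts.ncard ≤ 2) : H.edgeSet.ncard ≤ 1 := by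
  by_cases hne : H.edgeSet = ∅
  · simp [hne]
  · obtain ⟨e₀, he₀⟩ := Set.nonempty_iff_ne_empty.mpr hne
    have hsub : H.edgeSet ⊆ {e₀} := by
      intro e he
      induction e₀ with
      | _ u v =>
        induction e with
        | _ u' v' =>
          rw [SimpleGraph.Subgraph.mem_edgeSet] at he₀ he
          have huv : u ≠ v := (H.adj_sub he₀).ne
          have huv' : u' ≠ v' := (H.adj_sub he).ne
          have hv2 : ({u, v} : Set α) ⊆ H.verts := by
            rintro t (rfl | rfl)
            · exact he₀.fst_mem
            · exact he₀.snd_mem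
          have hcard2 : ({u, v} : Set α).ncard = 2 := Set.ncard_pair huv
          have hveq : H.verts = {u, v} := by
            refine (Set.eq_of_subset_of_ncard_le hv2 ?_ (Set.toFinite _)).symm
            rw [hcard2]
            exact h2
          have hu' : u' ∈ ({u, v} : Set α) := hveq ▸ he.fst_mem
          have hv' : v' ∈ ({u, v} : Set α) := hveq ▸ he.snd_mem
          simp only [Set.mem_insert_iff, Set.mem_singleton_iff] at hu' hv'
          rcases hu' with rfl | rfl <;> rcases hv' with rfl | rfl
          · exact absurd rfl huv'
          · rfl
          · exact Set.mem_singleton_iff.mpr Sym2.eq_swap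
          · exact absurd rfl huv'
    calc H.edgeSet.ncard ≤ ({e₀} : Set _).ncard := Set.ncard_le_ncard hsub (Set.toFinite _)
      _ = 1 := Set.ncard_singleton _

lemma subgraph_one_vert {α : Type} [Fintype α] {G : SimpleGraph α} (H : G.Subgraph)
    (h1 : H.verts.ncard ≤ 1) : H.edgeSet.ncard = 0 := by
  rw [Set.ncard_eq_zero (Set.toFinite _)]
  by_contra hc
  obtain ⟨e, he⟩ := Set.nonempty_iff_ne_empty.mpr hc
  induction e with
  | _ u v =>
    rw [SimpleGraph.Subgraph.mem_edgeSet] at he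
    have hne : u ≠ v := (H.adj_sub he).ne
    have : ({u, v} : Set α).ncard ≤ H.verts.ncard := by
      apply Set.ncard_le_ncard ?_ (Set.toFinite _)
      rintro t (rfl | rfl)
      · exact he.fst_mem
      · exact he.snd_mem
    rw [Set.ncard_pair hne] at this
    omega

lemma rootedDensity_nonneg {W : Type} [Fintype W] (B : SimpleGraph W) (R : Set W) :
    0 ≤ rootedDensity B R := by
  by_cases hne : {x : ℝ | ∃ H' : B.Subgraph, (H'.verts \ R).Nonempty ∧
      x = (H'.edgeSet.ncard : ℝ) / ((H'.verts \ R).ncard : ℝ)}.Nonempty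
  · obtain ⟨x, hx⟩ := hne
    have hx0 : 0 ≤ x := by
      obtain ⟨H', -, rfl⟩ := hx
      positivity
    exact hx0.trans (le_csSup (rootedDensitySet_bddAbove B R) hx)
  · unfold rootedDensity
    rw [Set.not_nonempty_iff_eq_empty.mp hne]
    simp [Real.sSup_empty]

end Part4c

section Part4d
set_option linter.unusedSectionVars false
set_option maxHeartbeats 8000000
open scoped Classical
open Finset

variable {V W : Type} [Fintype V] [DecidableEq V] [Fintype W] [DecidableEq W]

lemma density_bound {q : ℕ} (hq : 3 ≤ q) {L A : SimpleGraph V} {B : SimpleGraph W}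
    {ρ : NewV q (Fin q) ↪ W}
    (hBind : ∀ u ∈ Set.range ρ, ∀ v ∈ Set.range ρ, ¬B.Adj u v)
    {σ : Finset V → Fin q → V} {𝒬 : Set (Finset V)}
    (hσ : ∀ Q ∈ 𝒬, Function.Injective (σ Q))
    {R' : Set (NewV q V ⊕ (Finset V × W))}
    (hR' : ∀ t ∈ R', ∃ v : V, t = Sum.inl (Sum.inl v)) :
    rootedDensity2 (gluedAbsorber q L A B (⇑ρ) σ 𝒬) R'
      ≤ max (((q : ℝ) + 1) / 2) (rootedDensity2 B (Set.range ρ)) := by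
  set M := max (((q : ℝ) + 1) / 2) (rootedDensity2 B (Set.range ρ)) with hM
  have hqM : ((q:ℝ)+1)/2 ≤ M := le_max_left _ _
  have hq2 : (2:ℝ) ≤ ((q:ℝ)+1)/2 := by
    have : (3:ℝ) ≤ (q:ℝ) := by exact_mod_cast hq
    linarith
  have hM0 : (0:ℝ) ≤ M := by linarith
  have hmB : rootedDensity B (Set.range ρ) ≤ M := by
    rw [hM]
    exact le_trans (le_max_left _ _) (le_max_right _ _)
  have hm2B : density2 B ≤ M := by
    rw [hM]
    exact le_trans (le_max_right _ _) (le_max_right _ _)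
  have KEY : ∀ H' : (gluedAbsorber q L A B (⇑ρ) σ 𝒬).Subgraph,
      ((H'.edgeSet.ncard : ℝ) ≤ M * ((H'.verts \ R').ncard : ℝ)) ∧
      (3 ≤ H'.verts.ncard →
        (H'.edgeSet.ncard : ℝ) ≤ M * ((H'.verts.ncard : ℝ) - 2) + 1) := by
    intro H'
    -- the pullback of the nabla part
    set H₀ : (nabla q (L ⊔ A)).Subgraph :=
      { verts := {x | Sum.inl x ∈ H'.verts}
        Adj := fun x y => (nabla q (L ⊔ A)).Adj x y ∧ H'.Adj (Sum.inl x) (Sum.inl y)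
        adj_sub := fun h => h.1
        edge_vert := fun h => h.2.fst_mem
        symm := ⟨fun x y h => ⟨h.1.symm, h.2.symm⟩⟩ } with hH₀
    -- the pullback of each copy
    set HQ : Finset V → B.Subgraph := fun Q =>
      { verts := {w | jmap q ρ (σ Q) Q w ∈ H'.verts}
        Adj := fun w w' => B.Adj w w' ∧
          H'.Adj (jmap q ρ (σ Q) Q w) (jmap q ρ (σ Q) Q w')
        adj_sub := fun h => h.1
        edge_vert := fun h => h.2.fst_mem
        symm := ⟨fun w w' h => ⟨h.1.symm, h.2.symm⟩⟩ } with hHQ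
    set EdF : Finset (Sym2 (NewV q V ⊕ (Finset V × W))) := H'.edgeSet.toFinset with hEdF
    set E0F := EdF.filter (fun e => ∀ t ∈ e, t.isLeft) with hE0F
    set EQF : Finset V → Finset (Sym2 (NewV q V ⊕ (Finset V × W))) :=
      fun Q => EdF.filter (fun e => ∃ w, Sum.inr (Q,w) ∈ e) with hEQF
    set NQF : Finset V → Finset W :=
      fun Q => Finset.univ.filter
        (fun w => (Sum.inr (Q,w) : NewV q V ⊕ (Finset V × W)) ∈ H'.verts) with hNQF
    set sinl : ℕ := (H'.verts ∩ Set.range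
      (Sum.inl : NewV q V → NewV q V ⊕ (Finset V × W))).ncard with hsinl
    -- edge structure
    have gstruct : ∀ e ∈ EdF,
        (∃ x y : NewV q V, H₀.Adj x y ∧ e = s(Sum.inl x, Sum.inl y)) ∨
        (∃ Q, Q ∈ 𝒬 ∧ (∃ w w', (HQ Q).Adj w w' ∧
            e = s(jmap q ρ (σ Q) Q w, jmap q ρ (σ Q) Q w')) ∧
          (∃ w₀, Sum.inr (Q, w₀) ∈ e) ∧
          (∀ Q' w₀, (Sum.inr (Q', w₀) : NewV q V ⊕ (Finset V × W)) ∈ e → Q' = Q)) := by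
      intro e he
      rw [hEdF, Set.mem_toFinset] at he
      induction e with
      | _ a b =>
        rw [SimpleGraph.Subgraph.mem_edgeSet] at he
        have hg := H'.adj_sub he
        rw [glued_adj] at hg
        rcases hg with ⟨x, y, hxy, rfl, rfl⟩ | ⟨hneab, Q₀, hQ₀, w, w', hBww, rfl, rfl⟩
        · exact Or.inl ⟨x, y, ⟨by rw [nabla_sup]; exact hxy, he⟩, rfl⟩
        · have hwnr : w ∉ Set.range ρ ∨ w' ∉ Set.range ρ := by
            by_contra hc
            push_neg at hc
            exact hBind w hc.1 w' hc.2 hBww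
          refine Or.inr ⟨Q₀, hQ₀, ⟨w, w', ⟨hBww, he⟩, rfl⟩, ?_, ?_⟩
          · rcases hwnr with h | h
            · exact ⟨w, by rw [jmap_not q ρ _ _ h]; simp⟩
            · exact ⟨w', by rw [jmap_not q ρ _ _ h]; simp⟩
          · intro Q' w₀ hmem
            rw [Sym2.mem_iff] at hmem
            rcases hmem with h | h
            · exact (Prod.ext_iff.mp (jmap_eq_inr h.symm).2).1
            · exact (Prod.ext_iff.mp (jmap_eq_inr h.symm).2).1
    -- edge partition
    have hcoverE : EdF = E0F ∪ Finset.univ.biUnion EQF := by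
      ext e
      constructor
      · intro he
        rcases gstruct e he with ⟨x, y, -, rfl⟩ | ⟨Q, -, -, ⟨w₀, hw₀⟩, -⟩
        · refine Finset.mem_union_left _ (Finset.mem_filter.mpr ⟨he, ?_⟩)
          intro t ht
          rcases Sym2.mem_iff.mp ht with rfl | rfl <;> simp
        · exact Finset.mem_union_right _ (Finset.mem_biUnion.mpr
            ⟨Q, Finset.mem_univ _, Finset.mem_filter.mpr ⟨he, w₀, hw₀⟩⟩)
      · intro he
        rcases Finset.mem_union.mp he with h | h
        · exact (Finset.mem_filter.mp h).1
        · obtain ⟨Q, -, h⟩ := Finset.mem_biUnion.mp h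
          exact (Finset.mem_filter.mp h).1
    have hdisj0 : Disjoint E0F (Finset.univ.biUnion EQF) := by
      rw [Finset.disjoint_left]
      intro e he hq'
      obtain ⟨Q, -, hQm⟩ := Finset.mem_biUnion.mp hq'
      obtain ⟨-, w, hw⟩ := Finset.mem_filter.mp hQm
      have hall := (Finset.mem_filter.mp he).2
      have := hall _ hw
      simp at this
    have hdisjQ : ∀ Q ∈ (Finset.univ : Finset (Finset V)), ∀ Q' ∈ Finset.univ, Q ≠ Q' →
        Disjoint (EQF Q) (EQF Q') := by
      intro Q _ Q' _ hne
      rw [Finset.disjoint_left]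
      intro e heQ heQ'
      obtain ⟨heE, w, hw⟩ := Finset.mem_filter.mp heQ
      obtain ⟨-, w', hw'⟩ := Finset.mem_filter.mp heQ'
      rcases gstruct e heE with ⟨x, y, -, rfl⟩ | ⟨Q₀, -, -, -, huniq⟩
      · rcases Sym2.mem_iff.mp hw with h | h <;> simp at h
      · exact hne ((huniq Q w hw).trans (huniq Q' w' hw').symm)
    have hEcards : EdF.card = E0F.card + ∑ Q : Finset V, (EQF Q).card := by
      rw [hcoverE, Finset.card_union_of_disjoint hdisj0, Finset.card_biUnion hdisjQ]
    -- vertex counts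
    have hH₀v : H₀.verts.ncard = sinl := by
      rw [hsinl]
      have himg : H'.verts ∩ Set.range Sum.inl = Sum.inl '' H₀.verts := by
        ext t
        constructor
        · rintro ⟨hv, x, rfl⟩
          exact ⟨x, hv, rfl⟩
        · rintro ⟨x, hx, rfl⟩
          exact ⟨hx, x, rfl⟩
      rw [himg, Set.ncard_image_of_injective _ Sum.inl_injective]
    have hH₀g : (H'.verts ∩ {t | ∃ p, t = Sum.inl (Sum.inr p)}).ncard
        = (H₀.verts ∩ {x | x.isRight}).ncard := by
      have himg : H'.verts ∩ {t | ∃ p, t = Sum.inl (Sum.inr p)}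
          = Sum.inl '' (H₀.verts ∩ {x | x.isRight}) := by
        ext t
        constructor
        · rintro ⟨hv, p, rfl⟩
          exact ⟨Sum.inr p, ⟨hv, rfl⟩, rfl⟩
        · rintro ⟨x, ⟨hx, hr⟩, rfl⟩
          cases x with
          | inl u => simp at hr
          | inr p => exact ⟨hx, p, rfl⟩
      rw [himg, Set.ncard_image_of_injective _ Sum.inl_injective]
    have hinrsum : (H'.verts ∩ {t | t.isRight}).ncard = ∑ Q : Finset V, (NQF Q).card := by
      rw [Set.ncard_eq_toFinset_card']
      have hun : (H'.verts ∩ {t | t.isRight}).toFinset =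
          Finset.univ.biUnion (fun Q : Finset V =>
            (NQF Q).image (fun w => (Sum.inr (Q,w) : NewV q V ⊕ (Finset V × W)))) := by
        ext t
        rw [Set.mem_toFinset]
        constructor
        · rintro ⟨hv, hr⟩
          cases t with
          | inl x => simp at hr
          | inr p =>
            refine Finset.mem_biUnion.mpr ⟨p.1, Finset.mem_univ _,
              Finset.mem_image.mpr ⟨p.2, ?_, rfl⟩⟩
            rw [hNQF]
            exact Finset.mem_filter.mpr ⟨Finset.mem_univ _, hv⟩
        · intro ht
          obtain ⟨Q, -, ht⟩ := Finset.mem_biUnion.mp ht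
          obtain ⟨w, hw, rfl⟩ := Finset.mem_image.mp ht
          rw [hNQF, Finset.mem_filter] at hw
          exact ⟨hw.2, rfl⟩
      rw [hun, Finset.card_biUnion]
      · apply Finset.sum_congr rfl
        intro Q _
        apply Finset.card_image_of_injective
        intro a b h
        simpa using h
      · intro Q _ Q' _ hne
        rw [Function.onFun, Finset.disjoint_left]
        rintro t ht ht'
        obtain ⟨w, -, rfl⟩ := Finset.mem_image.mp ht
        obtain ⟨w', -, h⟩ := Finset.mem_image.mp ht'
        simp only [Sum.inr.injEq, Prod.mk.injEq] at h
        exact hne h.1.symm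
    have hvsplit : H'.verts.ncard = sinl + (H'.verts ∩ {t | t.isRight}).ncard := by
      have hdisj2 : Disjoint (H'.verts ∩ Set.range Sum.inl) (H'.verts ∩ {t | t.isRight}) := by
        rw [Set.disjoint_left]
        rintro t ⟨-, x, rfl⟩ ⟨-, hR⟩
        simp at hR
      have hun : H'.verts ∩ Set.range Sum.inl ∪ H'.verts ∩ {t | t.isRight} = H'.verts := by
        ext t
        simp only [Set.mem_union, Set.mem_inter_iff, Set.mem_setOf_eq, Set.mem_range]
        constructor
        · rintro (⟨hv, -⟩ | ⟨hv, -⟩) <;> exact hv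
        · intro hv
          cases t with
          | inl x => exact Or.inl ⟨hv, x, rfl⟩
          | inr p => exact Or.inr ⟨hv, rfl⟩
      rw [hsinl, ← Set.ncard_union_eq hdisj2 (Set.toFinite _) (Set.toFinite _), hun]
    -- edge count transfers
    have hE0le : E0F.card ≤ H₀.edgeSet.ncard := by
      have hsub : ↑E0F ⊆ Sym2.map (Sum.inl : NewV q V → NewV q V ⊕ (Finset V × W)) ''
          H₀.edgeSet := by
        intro e he
        rw [Finset.mem_coe, hE0F, Finset.mem_filter] at he
        obtain ⟨heE, hall⟩ := he
        rcases gstruct e heE with ⟨x, y, hxy, rfl⟩ | ⟨Q, -, -, ⟨w₀, hw₀⟩, -⟩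
        · exact ⟨s(x,y), SimpleGraph.Subgraph.mem_edgeSet.mpr hxy, by rw [Sym2.map_pair_eq]⟩
        · have := hall _ hw₀
          simp at this
      calc E0F.card = (↑E0F : Set (Sym2 (NewV q V ⊕ (Finset V × W)))).ncard := (Set.ncard_coe_finset _).symm
        _ ≤ (Sym2.map Sum.inl '' H₀.edgeSet).ncard :=
            Set.ncard_le_ncard hsub (Set.toFinite _)
        _ = H₀.edgeSet.ncard :=
            Set.ncard_image_of_injective _ (Sym2.map.injective Sum.inl_injective)
    have hEQle : ∀ Q ∈ 𝒬, (EQF Q).card ≤ (HQ Q).edgeSet.ncard := by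
      intro Q hQ
      have hsub : ↑(EQF Q) ⊆ Sym2.map (jmap q ρ (σ Q) Q) '' (HQ Q).edgeSet := by
        intro e he
        rw [Finset.mem_coe, hEQF, Finset.mem_filter] at he
        obtain ⟨heE, w₁, hw₁⟩ := he
        rcases gstruct e heE with ⟨x, y, -, rfl⟩ | ⟨Q₀, -, ⟨w, w', hadjw, rfl⟩, -, huniq⟩
        · rcases Sym2.mem_iff.mp hw₁ with h | h <;> simp at h
        · have hQQ₀ : Q = Q₀ := huniq Q w₁ hw₁
          subst hQQ₀
          exact ⟨s(w, w'), SimpleGraph.Subgraph.mem_edgeSet.mpr hadjw,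
            by rw [Sym2.map_pair_eq]⟩
      calc (EQF Q).card = (↑(EQF Q) : Set (Sym2 (NewV q V ⊕ (Finset V × W)))).ncard := (Set.ncard_coe_finset _).symm
        _ ≤ (Sym2.map (jmap q ρ (σ Q) Q) '' (HQ Q).edgeSet).ncard :=
            Set.ncard_le_ncard hsub (Set.toFinite _)
        _ = (HQ Q).edgeSet.ncard :=
            Set.ncard_image_of_injective _ (Sym2.map.injective (jmap_injective (hσ Q hQ) Q))
    have hEQ0 : ∀ Q, Q ∉ 𝒬 → (EQF Q).card = 0 := by
      intro Q hQ
      rw [Finset.card_eq_zero]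
      rw [Finset.eq_empty_iff_forall_notMem]
      intro e he
      rw [hEQF, Finset.mem_filter] at he
      obtain ⟨heE, w₁, hw₁⟩ := he
      rcases gstruct e heE with ⟨x, y, -, rfl⟩ | ⟨Q₀, hQ₀, -, -, huniq⟩
      · rcases Sym2.mem_iff.mp hw₁ with h | h <;> simp at h
      · exact hQ ((huniq Q w₁ hw₁) ▸ hQ₀)
    have hHQv1 : ∀ Q, ((HQ Q).verts \ Set.range ρ).ncard ≤ (NQF Q).card := by
      intro Q
      have hsub : (HQ Q).verts \ Set.range ρ ⊆ ↑(NQF Q) := by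
        rintro w ⟨hw, hnr⟩
        rw [Finset.mem_coe, hNQF, Finset.mem_filter]
        refine ⟨Finset.mem_univ _, ?_⟩
        rw [← jmap_not q ρ (σ Q) Q hnr]
        exact hw
      calc ((HQ Q).verts \ Set.range ρ).ncard ≤ (↑(NQF Q) : Set W).ncard :=
            Set.ncard_le_ncard hsub (Set.toFinite _)
        _ = (NQF Q).card := Set.ncard_coe_finset _
    have hHQv2 : ∀ Q ∈ 𝒬, (HQ Q).verts.ncard ≤ (NQF Q).card + sinl := by
      intro Q hQ
      have h2 : ((HQ Q).verts ∩ Set.range ρ).ncard ≤ sinl := by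
        rw [hsinl]
        apply Set.ncard_le_ncard_of_injOn (fun w => jmap q ρ (σ Q) Q w)
        · rintro w ⟨hw, x, rfl⟩
          exact ⟨hw, coreMap q (σ Q) x, (jmap_rho q ρ (σ Q) Q x).symm⟩
        · exact fun a _ b _ h => jmap_injective (hσ Q hQ) Q h
      have hsplit2 : (HQ Q).verts ⊆ ((HQ Q).verts \ Set.range ρ) ∪
          ((HQ Q).verts ∩ Set.range ρ) := by
        intro w hw
        by_cases h : w ∈ Set.range ρ
        · exact Or.inr ⟨hw, h⟩
        · exact Or.inl ⟨hw, h⟩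
      calc (HQ Q).verts.ncard
          ≤ (((HQ Q).verts \ Set.range ρ) ∪ ((HQ Q).verts ∩ Set.range ρ)).ncard :=
            Set.ncard_le_ncard hsplit2 (Set.toFinite _)
        _ ≤ ((HQ Q).verts \ Set.range ρ).ncard + ((HQ Q).verts ∩ Set.range ρ).ncard :=
            Set.ncard_union_le _ _
        _ ≤ (NQF Q).card + sinl := add_le_add (hHQv1 Q) h2
    -- real versions
    have hesumR : ((H'.edgeSet.ncard : ℕ) : ℝ) =
        (E0F.card : ℝ) + ∑ Q : Finset V, ((EQF Q).card : ℝ) := by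
      rw [show H'.edgeSet.ncard = EdF.card from Set.ncard_eq_toFinset_card' _, hEcards]
      push_cast
      rfl
    have hEQboundR : ∀ Q : Finset V, ((EQF Q).card : ℝ) ≤ M * ((NQF Q).card : ℝ) := by
      intro Q
      by_cases hQ : Q ∈ 𝒬
      · have h1 : ((EQF Q).card : ℝ) ≤ ((HQ Q).edgeSet.ncard : ℝ) := by
          exact_mod_cast hEQle Q hQ
        have h2 := subgraph_rooted_bound hBind (HQ Q)
        have h3 : (((HQ Q).verts \ Set.range ρ).ncard : ℝ) ≤ ((NQF Q).card : ℝ) := by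
          exact_mod_cast hHQv1 Q
        have hx0 : (0:ℝ) ≤ (((HQ Q).verts \ Set.range ρ).ncard : ℝ) := by positivity
        calc ((EQF Q).card : ℝ) ≤ ((HQ Q).edgeSet.ncard : ℝ) := h1
          _ ≤ rootedDensity B (Set.range ρ) * (((HQ Q).verts \ Set.range ρ).ncard : ℝ) := h2
          _ ≤ M * (((HQ Q).verts \ Set.range ρ).ncard : ℝ) :=
              mul_le_mul_of_nonneg_right hmB hx0
          _ ≤ M * ((NQF Q).card : ℝ) := mul_le_mul_of_nonneg_left h3 hM0
      · rw [hEQ0 Q hQ]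
        have : (0:ℝ) ≤ M * ((NQF Q).card : ℝ) := by exact mul_nonneg hM0 (Nat.cast_nonneg _)
        simpa using this
    have hE0boundR : (E0F.card : ℝ) ≤
        ((q:ℝ)+1)/2 * (((H₀.verts ∩ {x | x.isRight}).ncard : ℕ) : ℝ) := by
      calc (E0F.card : ℝ) ≤ ((H₀.edgeSet.ncard : ℕ) : ℝ) := by exact_mod_cast hE0le
        _ ≤ _ := (nab_bound hq H₀).1
    constructor
    · -- KEY1
      have hVsub : (((H₀.verts ∩ {x | x.isRight}).ncard : ℕ) : ℝ) +
          ∑ Q : Finset V, ((NQF Q).card : ℝ) ≤ ((H'.verts \ R').ncard : ℝ) := by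
        set Gs := H'.verts ∩ {t | ∃ p, t = Sum.inl (Sum.inr p)} with hGs
        set Is := H'.verts ∩ {t | t.isRight} with hIs
        have hdisjGI : Disjoint Gs Is := by
          rw [Set.disjoint_left]
          rintro t ⟨-, p, rfl⟩ ⟨-, hR⟩
          simp at hR
        have hsubGI : Gs ∪ Is ⊆ H'.verts \ R' := by
          rintro t (⟨hv, p, rfl⟩ | ⟨hv, hr⟩)
          · refine ⟨hv, fun hc => ?_⟩
            obtain ⟨v, hveq⟩ := hR' _ hc
            simp at hveq
          · refine ⟨hv, fun hc => ?_⟩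
            obtain ⟨v, hveq⟩ := hR' _ hc
            subst hveq
            simp at hr
        have hcount : Gs.ncard + Is.ncard ≤ (H'.verts \ R').ncard := by
          rw [← Set.ncard_union_eq hdisjGI (Set.toFinite _) (Set.toFinite _)]
          exact Set.ncard_le_ncard hsubGI (Set.toFinite _)
        have h1 : ((H₀.verts ∩ {x | x.isRight}).ncard : ℝ) = (Gs.ncard : ℝ) := by
          rw [hGs]
          exact_mod_cast congrArg (fun n : ℕ => (n:ℝ)) hH₀g.symm
        have h2 : ∑ Q : Finset V, ((NQF Q).card : ℝ) = (Is.ncard : ℝ) := by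
          rw [hIs]
          rw [hinrsum]
          push_cast
          rfl
        rw [h1, h2]
        exact_mod_cast hcount
      calc ((H'.edgeSet.ncard : ℕ) : ℝ)
          = (E0F.card : ℝ) + ∑ Q : Finset V, ((EQF Q).card : ℝ) := hesumR
        _ ≤ ((q:ℝ)+1)/2 * (((H₀.verts ∩ {x | x.isRight}).ncard : ℕ) : ℝ) +
            ∑ Q : Finset V, M * ((NQF Q).card : ℝ) := by
            apply add_le_add hE0boundR
            exact Finset.sum_le_sum (fun Q _ => hEQboundR Q)
        _ ≤ M * (((H₀.verts ∩ {x | x.isRight}).ncard : ℕ) : ℝ) +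
            M * ∑ Q : Finset V, ((NQF Q).card : ℝ) := by
            rw [← Finset.mul_sum]
            apply add_le_add_left
            apply mul_le_mul_of_nonneg_right hqM
            positivity
        _ = M * ((((H₀.verts ∩ {x | x.isRight}).ncard : ℕ) : ℝ) +
            ∑ Q : Finset V, ((NQF Q).card : ℝ)) := by ring
        _ ≤ M * ((H'.verts \ R').ncard : ℝ) := mul_le_mul_of_nonneg_left hVsub hM0
    · -- KEY2
      intro h3
      have hv3R : (3:ℝ) ≤ ((H'.verts.ncard : ℕ) : ℝ) := by exact_mod_cast h3
      have hvR : ((H'.verts.ncard : ℕ) : ℝ) = (sinl : ℝ) +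
          ∑ Q : Finset V, ((NQF Q).card : ℝ) := by
        rw [hvsplit, hinrsum]
        push_cast
        rfl
      rcases le_or_gt 2 sinl with hs2 | hs2
      · -- at least two vertices in the nabla part: refined nabla bound
        have h0 := (nab_bound hq H₀).2 (by rw [hH₀v]; exact hs2)
        rw [hH₀v] at h0
        have hE0R : (E0F.card : ℝ) ≤ ((q:ℝ)+1)/2 * ((sinl : ℝ) - 2) + 1 := by
          calc (E0F.card : ℝ) ≤ ((H₀.edgeSet.ncard : ℕ) : ℝ) := by exact_mod_cast hE0le
            _ ≤ _ := h0
        have hs2R : (2:ℝ) ≤ (sinl : ℝ) := by exact_mod_cast hs2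
        have hsum := Finset.sum_le_sum (fun Q _ => hEQboundR Q)
          (s := (Finset.univ : Finset (Finset V)))
        rw [hesumR, hvR]
        have hrw : ∑ Q : Finset V, M * ((NQF Q).card : ℝ) =
            M * ∑ Q : Finset V, ((NQF Q).card : ℝ) := by rw [← Finset.mul_sum]
        rw [hrw] at hsum
        have hmul : ((q:ℝ)+1)/2 * ((sinl : ℝ) - 2) ≤ M * ((sinl : ℝ) - 2) :=
          mul_le_mul_of_nonneg_right hqM (by linarith)
        nlinarith
      · -- at most one vertex over the nabla part: no nabla edges
        have hE00 : E0F.card = 0 := by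
          rw [Finset.card_eq_zero, Finset.eq_empty_iff_forall_notMem]
          intro e he
          rw [hE0F, Finset.mem_filter] at he
          obtain ⟨heE, hall⟩ := he
          rcases gstruct e heE with ⟨x, y, hxy, rfl⟩ | ⟨Q, -, -, ⟨w₀, hw₀⟩, -⟩
          · have hxy' : x ≠ y := by
              have := (H'.adj_sub hxy.2).ne
              exact fun hc => this (by rw [hc])
            have hpair : ({Sum.inl x, Sum.inl y} : Set (NewV q V ⊕ (Finset V × W))) ⊆
                H'.verts ∩ Set.range Sum.inl := by
              rintro t (rfl | rfl)
              · exact ⟨hxy.2.fst_mem, x, rfl⟩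
              · exact ⟨hxy.2.snd_mem, y, rfl⟩
            have hcard2 : ({Sum.inl x, Sum.inl y} :
                Set (NewV q V ⊕ (Finset V × W))).ncard = 2 :=
              Set.ncard_pair (fun hc => hxy' (Sum.inl_injective hc))
            have := Set.ncard_le_ncard hpair (Set.toFinite _)
            rw [hcard2, ← hsinl] at this
            omega
          · have := hall _ hw₀
            simp at this
        by_cases hex : ∃ Q₀, (EQF Q₀).card ≠ 0
        · obtain ⟨Q₀, hQ₀e⟩ := hex
          have hQ₀𝒬 : Q₀ ∈ 𝒬 := by
            by_contra hc
            exact hQ₀e (hEQ0 Q₀ hc)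
          have hvQ₀2 : 2 ≤ (HQ Q₀).verts.ncard := by
            by_contra hc
            push_neg at hc
            have h1 := subgraph_one_vert (HQ Q₀) (by omega)
            have h2 := hEQle Q₀ hQ₀𝒬
            omega
          have hrefQ₀ : ((EQF Q₀).card : ℝ) ≤ M * (((HQ Q₀).verts.ncard : ℕ) : ℝ)
              - 2 * M + 1 := by
            rcases le_or_gt 3 ((HQ Q₀).verts.ncard) with hv3 | hv3
            · have h2b := subgraph_density2_bound (HQ Q₀) hv3
              have h1 : ((EQF Q₀).card : ℝ) ≤ (((HQ Q₀).edgeSet.ncard : ℕ) : ℝ) := by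
                exact_mod_cast hEQle Q₀ hQ₀𝒬
              have hv3R' : (3:ℝ) ≤ (((HQ Q₀).verts.ncard : ℕ) : ℝ) := by exact_mod_cast hv3
              have hd2 : density2 B * ((((HQ Q₀).verts.ncard : ℕ) : ℝ) - 2) ≤
                  M * ((((HQ Q₀).verts.ncard : ℕ) : ℝ) - 2) :=
                mul_le_mul_of_nonneg_right hm2B (by linarith)
              nlinarith
            · have hvv : (HQ Q₀).verts.ncard = 2 := by omega
              have h1 := subgraph_small_edge (HQ Q₀) (by omega)
              have h1R : ((EQF Q₀).card : ℝ) ≤ 1 := by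
                have := (hEQle Q₀ hQ₀𝒬).trans h1
                exact_mod_cast this
              rw [hvv]
              norm_num
              linarith
          have hsplitsum : ∑ Q : Finset V, ((EQF Q).card : ℝ) =
              ((EQF Q₀).card : ℝ) + ∑ Q ∈ Finset.univ.erase Q₀, ((EQF Q).card : ℝ) :=
            (Finset.add_sum_erase _ _ (Finset.mem_univ Q₀)).symm
          have hrestsum : ∑ Q ∈ Finset.univ.erase Q₀, ((EQF Q).card : ℝ) ≤
              M * ∑ Q ∈ Finset.univ.erase Q₀, ((NQF Q).card : ℝ) := by
            rw [Finset.mul_sum]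
            exact Finset.sum_le_sum (fun Q _ => hEQboundR Q)
          have hnsplit : ∑ Q : Finset V, ((NQF Q).card : ℝ) =
              ((NQF Q₀).card : ℝ) + ∑ Q ∈ Finset.univ.erase Q₀, ((NQF Q).card : ℝ) :=
            (Finset.add_sum_erase _ _ (Finset.mem_univ Q₀)).symm
          have hvQle : (((HQ Q₀).verts.ncard : ℕ) : ℝ) ≤ ((NQF Q₀).card : ℝ) + (sinl : ℝ) := by
            exact_mod_cast hHQv2 Q₀ hQ₀𝒬
          have hsinlR : (sinl : ℝ) ≤ 1 := by exact_mod_cast (by omega : sinl ≤ 1)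
          have hrest0 : (0:ℝ) ≤ ∑ Q ∈ Finset.univ.erase Q₀, ((NQF Q).card : ℝ) := by
            exact Finset.sum_nonneg (fun _ _ => Nat.cast_nonneg _)
          rw [hesumR, hvR, hE00, hsplitsum, hnsplit]
          push_cast
          nlinarith
        · push_neg at hex
          have hzero : ∑ Q : Finset V, ((EQF Q).card : ℝ) = 0 := by
            apply Finset.sum_eq_zero
            intro Q _
            rw [hex Q]
            norm_num
          rw [hesumR, hE00, hzero]
          norm_num
          nlinarith
  rw [rootedDensity2]
  apply max_le
  · apply Real.sSup_le _ hM0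
    rintro x ⟨H', hne, rfl⟩
    have hpos : (0:ℝ) < ((H'.verts \ R').ncard : ℝ) := by
      have := (Set.ncard_pos (Set.toFinite _)).mpr hne
      exact_mod_cast this
    rw [div_le_iff₀ hpos]
    exact (KEY H').1
  · apply Real.sSup_le _ hM0
    rintro x ⟨H', h3, rfl⟩
    have hpos : (0:ℝ) < ((H'.verts.ncard : ℝ)) - 2 := by
      have : (3:ℝ) ≤ (H'.verts.ncard : ℝ) := by exact_mod_cast h3
      linarith
    rw [div_le_iff₀ hpos]
    have := (KEY H').2 h3
    linarith

end Part4d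

/-- Let `L` be `K_q`-divisible, `A` a `K_q`-absorber for `L`, and `B` a
`K_q`-absorber for `∇_q K_q`.  Given `K_q`-decompositions `𝒬₁` of `A` and `𝒬₂`
of `L ⊔ A`, the glued graph
`A' := ∇_q L ∪ ∇_q A ∪ ⋃_{Q ∈ 𝒬₁ ∪ 𝒬₂} B_Q` is again a `K_q`-absorber for
`L`, and moreover `m₂(A', V(L)) ≤ max{(q+1)/2, m₂(B, V(∇_q K_q))}`. -/
theorem nabla_construction {V W : Type} [Fintype V] [DecidableEq V]
    [Fintype W] [DecidableEq W] (q : ℕ) (hq : 3 ≤ q)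
    (L A : SimpleGraph V) (VL : Set V)
    (hLdiv : IsKqDivisible q L)
    (hAabs : IsAbsorber q L A VL)
    (𝒬₁ 𝒬₂ : Set (Finset V))
    (h1 : IsKqDecomp q A 𝒬₁) (h2 : IsKqDecomp q (L ⊔ A) 𝒬₂)
    (B : SimpleGraph W) (ρ : NewV q (Fin q) ↪ W)
    (hB : IsAbsorber q ((nabla q (⊤ : SimpleGraph (Fin q))).map ρ) B (Set.range ρ))
    (σ : Finset V → Fin q → V)
    (hσ : ∀ Q ∈ 𝒬₁ ∪ 𝒬₂, Function.Injective (σ Q) ∧ ∀ i : Fin q, σ Q i ∈ Q) :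
    IsAbsorber q
      (L.map ((Function.Embedding.inl : V ↪ NewV q V).trans
        (Function.Embedding.inl : NewV q V ↪ NewV q V ⊕ (Finset V × W))))
      (gluedAbsorber q L A B (⇑ρ) σ (𝒬₁ ∪ 𝒬₂))
      ((fun v : V => (Sum.inl (Sum.inl v) : NewV q V ⊕ (Finset V × W))) '' VL) ∧
    rootedDensity2 (gluedAbsorber q L A B (⇑ρ) σ (𝒬₁ ∪ 𝒬₂))
        ((fun v : V => (Sum.inl (Sum.inl v) : NewV q V ⊕ (Finset V × W))) '' VL)
      ≤ max (((q : ℝ) + 1) / 2) (rootedDensity2 B (Set.range ρ)) := by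
  obtain ⟨hBsup, hBind, ⟨𝒟B, hDB⟩, ⟨𝒟NB, hDNB⟩⟩ := hB
  obtain ⟨hLsup, hAind, -, -⟩ := hAabs
  have hQcl : ∀ Q ∈ 𝒬₁ ∪ 𝒬₂, (L ⊔ A).IsNClique q Q := by
    rintro Q (hQ | hQ)
    · exact (h1.1 Q hQ).mono le_sup_right
    · exact h2.1 Q hQ
  have hdisjLA : ∀ f ∈ L.edgeSet, f ∉ A.edgeSet := by
    intro f hfL hfA
    induction f with
    | _ u v =>
      rw [SimpleGraph.mem_edgeSet] at hfL hfA
      exact hAind u (hLsup ((SimpleGraph.mem_support _).mpr ⟨v, hfL⟩)) v (hLsup ((SimpleGraph.mem_support _).mpr ⟨u, hfL.symm⟩)) hfA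
  constructor
  · refine ⟨?_, ?_, ?_, ?_⟩
    · -- support
      intro t ht
      obtain ⟨t', hadjm⟩ := (SimpleGraph.mem_support _).mp ht
      rw [SimpleGraph.map_adj] at hadjm
      obtain ⟨u, v, huv, ha, hb⟩ := hadjm
      exact ⟨u, hLsup ((SimpleGraph.mem_support _).mpr ⟨v, huv⟩), ha⟩
    · -- independence
      rintro a ⟨u, hu, rfl⟩ b ⟨v, hv, rfl⟩ hadj
      rw [glued_adj] at hadj
      rcases hadj with ⟨x, y, hxy, hx, hy⟩ | ⟨-, Q₀, hQ₀, w, w', hBww, ha, hb⟩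
      · rw [← nabla_sup] at hxy
        have hx' : x = Sum.inl u := by simpa using hx.symm
        have hy' : y = Sum.inl v := by simpa using hy.symm
        subst hx'; subst hy'
        exact nabla_no_inl_inl hxy
      · obtain ⟨x₀, hx₀, hcx⟩ := jmap_eq_inl ha.symm
        obtain ⟨y₀, hy₀, hcy⟩ := jmap_eq_inl hb.symm
        exact hBind w (hx₀ ▸ ⟨x₀, rfl⟩) w' (hy₀ ▸ ⟨y₀, rfl⟩) hBww
    · -- decomposition of the glued graph alone
      have hd := decomp_glued (M := (⊥ : SimpleGraph V)) (GA := L ⊔ A) hq hBind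
        Set.subset_union_right hσ hQcl bot_le (by simp) (by simp) h2 hDNB hDB
      have hmapbot : ((⊥ : SimpleGraph V).map ((Function.Embedding.inl : V ↪ NewV q V).trans
          (Function.Embedding.inl : NewV q V ↪ NewV q V ⊕ (Finset V × W)))) =
          (⊥ : SimpleGraph (NewV q V ⊕ (Finset V × W))) := by
        ext a b; simp [SimpleGraph.map_adj]
      rw [hmapbot, bot_sup_eq] at hd
      exact ⟨_, hd⟩
    · -- decomposition of L' joined with the glued graph
      exact ⟨_, decomp_glued (M := L) (GA := A) hq hBind Set.subset_union_left hσ hQcl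
        le_rfl (SimpleGraph.edgeSet_sup ..) hdisjLA h1 hDNB hDB⟩
  · exact density_bound hq hBind (fun Q hQ => (hσ Q hQ).1)
      (by rintro t ⟨v, hv, rfl⟩; exact ⟨v, rfl⟩)
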